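/- arXiv:1405.6894 — 9 statements merged into one kernel-verified Lean document; each statement's English description precedes it below -/
import Mathlib

section
/- The permutation τ_{k,n} of [n], obtained by concatenating k increasing runs of lengths ⌊n/k⌋ or ⌈n/k⌉ in decreasing order of values (so that it contains no decreasing subsequence of length k+1), contains exactly r·C(⌈n/k⌉, k+1) + (k−r)·C(⌊n/k⌋, k+1) monotone subsequences of length k+1, where r ∈ {0,...,k−1} satisfies r ≡ n (mod k). -/
/-- The value (0-indexed) at position `p` (0-indexed) of the permutation `τ_{k,n}`,
obtained by concatenating the `k` increasing blocks of values
`⌊i·n/k⌋, …, ⌊(i+1)·n/k⌋ - 1` for `i = k-1` down to `0`. -/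
def tauVal (k n p : ℕ) : ℕ :=
  let b := ((n - p) * k - 1) / n
  b * n / k + (p + (b + 1) * n / k - n)

namespace TauAux

/-- The block index of position `p`. -/
def blk (k n p : ℕ) : ℕ := ((n - p) * k - 1) / n

lemma tauVal_eq (k n p : ℕ) :
    tauVal k n p = blk k n p * n / k + (p + (blk k n p + 1) * n / k - n) := rfl

lemma lt_div_succ_mul (a n : ℕ) (hn : 0 < n) : a < (a / n + 1) * n := by
  have h := Nat.div_add_mod a n
  have h2 : a % n < n := Nat.mod_lt a hn
  have h3 : (a / n + 1) * n = n * (a / n) + n := by ring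
  omega

variable {k n p q b : ℕ}

lemma blk_lt (hk : 0 < k) (hn : 0 < n) (hp : p < n) : blk k n p < k := by
  have h1 : (n - p) * k ≤ n * k := Nat.mul_le_mul_right _ (Nat.sub_le _ _)
  have h2 : 0 < n * k := Nat.mul_pos hn hk
  have h3 : n * k = k * n := Nat.mul_comm n k
  exact (Nat.div_lt_iff_lt_mul hn).mpr (by omega)

lemma blk_bounds (hk : 0 < k) (hn : 0 < n) (hp : p < n) :
    n - (blk k n p + 1) * n / k ≤ p ∧ p < n - blk k n p * n / k := by
  have hm : 1 ≤ (n - p) * k := Nat.mul_pos (by omega) hk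
  have h1 : blk k n p * n ≤ (n - p) * k - 1 := Nat.div_mul_le_self _ _
  have h2 : (n - p) * k - 1 < (blk k n p + 1) * n := lt_div_succ_mul _ _ hn
  have h3 : blk k n p * n / k < n - p := (Nat.div_lt_iff_lt_mul hk).mpr (by omega)
  have h4 : n - p ≤ (blk k n p + 1) * n / k := (Nat.le_div_iff_mul_le hk).mpr (by omega)
  set A := blk k n p * n / k
  set C := (blk k n p + 1) * n / k
  clear_value A C
  omega

lemma blk_eq (hk : 0 < k) (hn : 0 < n)
    (hb1 : n - (b + 1) * n / k ≤ p) (hb2 : p < n - b * n / k) : blk k n p = b := by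
  have h1 : b * n < (n - p) * k := by
    refine (Nat.div_lt_iff_lt_mul hk).mp ?_
    set A := b * n / k with hA
    clear_value A
    omega
  have h2 : (n - p) * k ≤ (b + 1) * n := by
    refine (Nat.le_div_iff_mul_le hk).mp ?_
    set C := (b + 1) * n / k with hC
    clear_value C
    omega
  exact Nat.div_eq_of_lt_le (by omega) (by omega)

lemma blk_anti (hpq : p ≤ q) : blk k n q ≤ blk k n p :=
  Nat.div_le_div_right
    (Nat.sub_le_sub_right (Nat.mul_le_mul_right _ (Nat.sub_le_sub_left hpq n)) 1)

lemma val_lt_same (hk : 0 < k) (hn : 0 < n) (hp : p < n) (hq : q < n) (hpq : p < q)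
    (hbl : blk k n p = blk k n q) : tauVal k n p < tauVal k n q := by
  obtain ⟨h1p, h2p⟩ := blk_bounds hk hn hp
  obtain ⟨h1q, h2q⟩ := blk_bounds hk hn hq
  rw [hbl] at h1p h2p
  rw [tauVal_eq, tauVal_eq, hbl]
  set B := blk k n q * n / k
  set C := (blk k n q + 1) * n / k
  clear_value B C
  omega

lemma val_lt_diff (hk : 0 < k) (hn : 0 < n) (hq : q < n)
    (hbl : blk k n q < blk k n p) : tauVal k n q < tauVal k n p := by
  obtain ⟨h1q, h2q⟩ := blk_bounds hk hn hq
  have hC : (blk k n q + 1) * n / k ≤ blk k n p * n / k :=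
    Nat.div_le_div_right (Nat.mul_le_mul_right _ hbl)
  rw [tauVal_eq, tauVal_eq]
  set Bq := blk k n q * n / k
  set Cq := (blk k n q + 1) * n / k
  set Bp := blk k n p * n / k
  set Cp := (blk k n p + 1) * n / k
  clear_value Bq Cq Bp Cp
  omega

end TauAux

open TauAux in
/-- `τ_{k,n}` contains exactly `r·C(⌈n/k⌉, k+1) + (k-r)·C(⌊n/k⌋, k+1)` monotone
subsequences of length `k+1`, where `r ≡ n (mod k)`, `0 ≤ r < k`. -/
theorem stmt_1 (k n : ℕ) (hk : 0 < k) (hn : 0 < n) :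
    Set.ncard {s : Finset (Fin n) | s.card = k + 1 ∧
        (StrictMonoOn (fun p : Fin n => tauVal k n p) (↑s : Set (Fin n)) ∨
          StrictAntiOn (fun p : Fin n => tauVal k n p) (↑s : Set (Fin n)))} =
      n % k * Nat.choose ((n + k - 1) / k) (k + 1) +
        (k - n % k) * Nat.choose (n / k) (k + 1) := by
  classical
  set f : Fin n → ℕ := fun p : Fin n => tauVal k n p with hf
  -- Step 0: ncard to Finset.card
  have hset : {s : Finset (Fin n) | s.card = k + 1 ∧
      (StrictMonoOn f (↑s : Set (Fin n)) ∨ StrictAntiOn f (↑s : Set (Fin n)))}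
      = ↑(Finset.univ.filter fun s : Finset (Fin n) =>
          s.card = k + 1 ∧ (StrictMonoOn f (↑s : Set (Fin n)) ∨ StrictAntiOn f (↑s : Set (Fin n)))) := by
    ext s
    simp
  rw [hset, Set.ncard_coe_finset]
  -- characterization
  have hchar : ∀ s : Finset (Fin n),
      (s.card = k + 1 ∧ (StrictMonoOn f (↑s : Set (Fin n)) ∨ StrictAntiOn f (↑s : Set (Fin n)))) ↔
      (∃ b, b < k ∧ s.card = k + 1 ∧ ∀ p ∈ s, blk k n p.val = b) := by
    intro s
    constructor
    · rintro ⟨hcard, hmono | hanti⟩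
      · have hne : s.Nonempty := Finset.card_pos.mp (by omega)
        obtain ⟨p0, hp0⟩ := hne
        refine ⟨blk k n p0.val, blk_lt hk hn p0.isLt, hcard, ?_⟩
        intro p hp
        by_contra hneq
        rcases lt_trichotomy p p0 with h | h | h
        · have hle : blk k n p0.val ≤ blk k n p.val := blk_anti (le_of_lt h)
          have hlt : blk k n p0.val < blk k n p.val := lt_of_le_of_ne hle (fun e => hneq e.symm)
          have h1 : tauVal k n p0.val < tauVal k n p.val := val_lt_diff hk hn p0.isLt hlt
          have h2 : f p < f p0 := hmono hp hp0 h
          simp only [hf] at h2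
          omega
        · exact hneq (by rw [h])
        · have hle : blk k n p.val ≤ blk k n p0.val := blk_anti (le_of_lt h)
          have hlt : blk k n p.val < blk k n p0.val := lt_of_le_of_ne hle hneq
          have h1 : tauVal k n p.val < tauVal k n p0.val := val_lt_diff hk hn p.isLt hlt
          have h2 : f p0 < f p := hmono hp0 hp h
          simp only [hf] at h2
          omega
      · exfalso
        have hinj : Set.InjOn (fun p : Fin n => blk k n p.val) ↑s := by
          intro x hx y hy hxy
          by_contra hne
          rcases lt_trichotomy x y with h | h | h
          · have h1 : f y < f x := hanti hx hy h
            have h2 : tauVal k n x.val < tauVal k n y.val :=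
              val_lt_same hk hn x.isLt y.isLt h hxy
            simp only [hf] at h1
            omega
          · exact hne h
          · have h1 : f x < f y := hanti hy hx h
            have h2 : tauVal k n y.val < tauVal k n x.val :=
              val_lt_same hk hn y.isLt x.isLt h hxy.symm
            simp only [hf] at h1
            omega
        have hmem : ∀ a ∈ s, blk k n a.val ∈ Finset.range k := by
          intro a _
          exact Finset.mem_range.mpr (blk_lt hk hn a.isLt)
        have := Finset.card_le_card_of_injOn _ hmem hinj
        rw [hcard, Finset.card_range] at this
        omega
    · rintro ⟨b, hbk, hcard, hall⟩
      refine ⟨hcard, Or.inl ?_⟩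
      intro x hx y hy hxy
      have hbe : blk k n x.val = blk k n y.val := by
        rw [hall x hx, hall y hy]
      exact val_lt_same hk hn x.isLt y.isLt hxy hbe
  -- rewrite the filter as a disjoint union of powersetCards
  have hfilter : (Finset.univ.filter fun s : Finset (Fin n) =>
      s.card = k + 1 ∧ (StrictMonoOn f (↑s : Set (Fin n)) ∨ StrictAntiOn f (↑s : Set (Fin n))))
      = (Finset.range k).biUnion (fun b =>
          Finset.powersetCard (k + 1)
            (Finset.univ.filter (fun p : Fin n => blk k n p.val = b))) := by
    ext s
    rw [Finset.mem_filter, Finset.mem_biUnion]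
    simp only [Finset.mem_univ, true_and, Finset.mem_powersetCard, Finset.mem_range]
    rw [hchar s]
    constructor
    · rintro ⟨b, hb, hc, hall⟩
      exact ⟨b, hb, fun p hp => Finset.mem_filter.mpr ⟨Finset.mem_univ _, hall p hp⟩, hc⟩
    · rintro ⟨b, hb, hsub, hc⟩
      exact ⟨b, hb, hc, fun p hp => (Finset.mem_filter.mp (hsub hp)).2⟩
  rw [hfilter]
  have hdisj : ∀ b₁ ∈ Finset.range k, ∀ b₂ ∈ Finset.range k, b₁ ≠ b₂ →
      Disjoint (Finset.powersetCard (k + 1)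
          (Finset.univ.filter (fun p : Fin n => blk k n p.val = b₁)))
        (Finset.powersetCard (k + 1)
          (Finset.univ.filter (fun p : Fin n => blk k n p.val = b₂))) := by
    intro b₁ _ b₂ _ hne
    rw [Finset.disjoint_left]
    intro s hs1 hs2
    obtain ⟨hsub1, hc1⟩ := Finset.mem_powersetCard.mp hs1
    obtain ⟨hsub2, _⟩ := Finset.mem_powersetCard.mp hs2
    have hsne : s.Nonempty := Finset.card_pos.mp (by omega)
    obtain ⟨p, hp⟩ := hsne
    have e1 := (Finset.mem_filter.mp (hsub1 hp)).2
    have e2 := (Finset.mem_filter.mp (hsub2 hp)).2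
    exact hne (e1 ▸ e2 ▸ rfl)
  rw [Finset.card_biUnion hdisj]
  simp only [Finset.card_powersetCard]
  -- block sizes
  have hBcard : ∀ b ∈ Finset.range k,
      (Finset.univ.filter (fun p : Fin n => blk k n p.val = b)).card
        = (b + 1) * n / k - b * n / k := by
    intro b hb
    have hbk : b < k := Finset.mem_range.mp hb
    have hcn : n - b * n / k ≤ n := Nat.sub_le _ _
    have hchar2 : ∀ p : Fin n,
        blk k n p.val = b ↔ (n - (b + 1) * n / k ≤ p.val ∧ p.val < n - b * n / k) := by
      intro p
      constructor
      · intro h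
        have := blk_bounds hk hn p.isLt
        rw [h] at this
        exact this
      · intro h
        exact blk_eq hk hn h.1 h.2
    have hcard2 : (Finset.univ.filter (fun p : Fin n => blk k n p.val = b)).card
        = (Finset.Ico (n - (b + 1) * n / k) (n - b * n / k)).card :=
      Finset.card_bij' (fun (p : Fin n) _ => p.val)
        (fun x hx => ⟨x, lt_of_lt_of_le (Finset.mem_Ico.mp hx).2 hcn⟩)
        (fun a ha => Finset.mem_Ico.mpr ((hchar2 a).mp (Finset.mem_filter.mp ha).2))
        (fun x hx => Finset.mem_filter.mpr
          ⟨Finset.mem_univ _, (hchar2 _).mpr (Finset.mem_Ico.mp hx)⟩)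
        (fun a ha => rfl)
        (fun x hx => rfl)
    rw [hcard2, Nat.card_Ico]
    have h1 : (b + 1) * n / k ≤ n := by
      have h : (b + 1) * n / k ≤ k * n / k :=
        Nat.div_le_div_right (Nat.mul_le_mul_right n hbk)
      rwa [Nat.mul_div_cancel_left _ hk] at h
    have h2 : b * n / k ≤ (b + 1) * n / k :=
      Nat.div_le_div_right (Nat.mul_le_mul_right _ (Nat.le_succ _))
    set A := b * n / k
    set B := (b + 1) * n / k
    clear_value A B
    omega
  rw [Finset.sum_congr rfl (fun b hb => by rw [hBcard b hb])]
  -- final arithmetic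
  set Q := n / k with hQ
  set r := n % k with hr
  have hn_eq : n = k * Q + r := by rw [hQ, hr]; exact (Nat.div_add_mod n k).symm
  have hrk : r < k := Nat.mod_lt _ hk
  clear_value Q r
  have hsize : ∀ b : ℕ, (b + 1) * n / k - b * n / k = Q + ((b + 1) * r / k - b * r / k) := by
    intro b
    have e : ∀ m : ℕ, m * n / k = m * Q + m * r / k := by
      intro m
      have h : m * n = m * r + m * Q * k := by rw [hn_eq]; ring
      rw [h, Nat.add_mul_div_right _ _ hk]
      exact Nat.add_comm _ _
    rw [e (b + 1), e b]
    have h2 : b * r / k ≤ (b + 1) * r / k :=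
      Nat.div_le_div_right (Nat.mul_le_mul_right _ (Nat.le_succ _))
    have h3 : (b + 1) * Q = b * Q + Q := by ring
    set X := (b + 1) * r / k
    set Y := b * r / k
    clear_value X Y
    omega
  have hd_le : ∀ b : ℕ, (b + 1) * r / k - b * r / k ≤ 1 := by
    intro b
    have h1 : (b + 1) * r ≤ b * r + k := by
      have h : (b + 1) * r = b * r + r := by ring
      omega
    have h2 : (b + 1) * r / k ≤ (b * r + k) / k := Nat.div_le_div_right h1
    rw [Nat.add_div_right _ hk] at h2
    set X := (b + 1) * r / k
    set Y := b * r / k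
    clear_value X Y
    omega
  have hdsum : ∀ m : ℕ, ∑ b ∈ Finset.range m, ((b + 1) * r / k - b * r / k) = m * r / k := by
    intro m
    induction m with
    | zero => simp
    | succ m ih =>
      rw [Finset.sum_range_succ, ih]
      have h : m * r / k ≤ (m + 1) * r / k :=
        Nat.div_le_div_right (Nat.mul_le_mul_right _ (Nat.le_succ _))
      set X := (m + 1) * r / k
      set Y := m * r / k
      clear_value X Y
      omega
  have hCle : Nat.choose Q (k + 1) ≤ Nat.choose (Q + 1) (k + 1) :=
    Nat.choose_le_choose _ (Nat.le_succ _)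
  have hchoose : ∀ b : ℕ, Nat.choose (Q + ((b + 1) * r / k - b * r / k)) (k + 1)
      = Nat.choose Q (k + 1) + ((b + 1) * r / k - b * r / k)
          * (Nat.choose (Q + 1) (k + 1) - Nat.choose Q (k + 1)) := by
    intro b
    rcases Nat.le_one_iff_eq_zero_or_eq_one.mp (hd_le b) with h0 | h1
    · rw [h0]; simp
    · rw [h1, one_mul]
      omega
  calc ∑ b ∈ Finset.range k, Nat.choose ((b + 1) * n / k - b * n / k) (k + 1)
      = ∑ b ∈ Finset.range k, (Nat.choose Q (k + 1) + ((b + 1) * r / k - b * r / k)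
          * (Nat.choose (Q + 1) (k + 1) - Nat.choose Q (k + 1))) := by
        refine Finset.sum_congr rfl (fun b _ => ?_)
        rw [hsize b, hchoose b]
    _ = k * Nat.choose Q (k + 1)
          + r * (Nat.choose (Q + 1) (k + 1) - Nat.choose Q (k + 1)) := by
        rw [Finset.sum_add_distrib, Finset.sum_const, Finset.card_range, ← Finset.sum_mul,
          hdsum k, Nat.mul_div_cancel_left _ hk, smul_eq_mul]
    _ = r * Nat.choose ((n + k - 1) / k) (k + 1) + (k - r) * Nat.choose Q (k + 1) := by
        by_cases hr0 : r = 0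
        · rw [hr0]; simp
        · have hceil : (n + k - 1) / k = Q + 1 := by
            have h1 : n + k - 1 = k * Q + (k + (r - 1)) := by omega
            rw [h1, Nat.mul_add_div hk]
            have h2 : (k + (r - 1)) / k = 1 := by
              rw [Nat.add_comm, Nat.add_div_right _ hk, Nat.div_eq_of_lt (show r - 1 < k by omega)]
            omega
          rw [hceil]
          have e1 : r * (Nat.choose (Q + 1) (k + 1) - Nat.choose Q (k + 1)) + r * Nat.choose Q (k + 1)
              = r * Nat.choose (Q + 1) (k + 1) := by
            rw [← Nat.mul_add, Nat.sub_add_cancel hCle]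
          have e2 : (k - r) * Nat.choose Q (k + 1) + r * Nat.choose Q (k + 1)
              = k * Nat.choose Q (k + 1) := by
            rw [← Nat.add_mul, Nat.sub_add_cancel hrk.le]
          omega
end

section
/- Let a ≥ b > 0 be integers and let F be a family of a-element sets. Then the shadow ∂_b F = {B : |B| = b and B ⊆ A for some A ∈ F} satisfies |∂_b F| ≥ min{|F|/2, 2^b}. -/
open Finset
open scoped FinsetFamily

private lemma choose_le_choose_of_half {n : ℕ} :
    ∀ {i j : ℕ}, i ≤ j → 2 * j ≤ n → n.choose i ≤ n.choose j := by
  intro i j hij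
  induction j with
  | zero =>
    intro _
    have : i = 0 := Nat.le_zero.1 hij
    simp [this]
  | succ k ih =>
    intro hj
    rcases Nat.lt_or_ge i (k + 1) with h | h
    · have hk2 : 2 * k ≤ n := by omega
      have hkhalf : k < n / 2 := by
        have : k + 1 ≤ n / 2 := (Nat.le_div_iff_mul_le (by norm_num)).2 (by omega)
        omega
      exact le_trans (ih (by omega) hk2) (Nat.choose_le_succ_of_lt_half_left hkhalf)
    · have : i = k + 1 := le_antisymm hij h
      simp [this]

private lemma choose_anti {n r s : ℕ} (hsr : s ≤ r) (hn : n ≤ r + s) :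
    n.choose r ≤ n.choose s := by
  rcases Nat.lt_or_ge n r with h | hrn
  · simp [Nat.choose_eq_zero_of_lt h]
  rcases le_or_gt (2 * s) n with h2 | h2
  · calc n.choose r = n.choose (n - r) := (Nat.choose_symm hrn).symm
      _ ≤ n.choose s := choose_le_choose_of_half (by omega) h2
  · have hsn : s ≤ n := hsr.trans hrn
    calc n.choose r = n.choose (n - r) := (Nat.choose_symm hrn).symm
      _ ≤ n.choose (n - s) := choose_le_choose_of_half (by omega) (by omega)
      _ = n.choose s := Nat.choose_symm hsn

private lemma two_pow_le_central_choose (b : ℕ) : 2 ^ b ≤ (2 * b).choose b := by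
  induction b with
  | zero => simp
  | succ k ih =>
    have h1 : (2 * (k + 1)).choose (k + 1)
        = (2 * k + 1).choose k + (2 * k + 1).choose (k + 1) := by
      have h2 : 2 * (k + 1) = (2 * k + 1) + 1 := by ring
      rw [h2, Nat.choose_succ_succ]
    have hsymm : (2 * k + 1).choose (k + 1) = (2 * k + 1).choose k := by
      have := Nat.choose_symm (n := 2 * k + 1) (k := k + 1) (by omega)
      simpa [show 2 * k + 1 - (k + 1) = k by omega] using this.symm
    have hmono : (2 * k).choose k ≤ (2 * k + 1).choose k :=
      Nat.choose_le_choose k (by omega)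
    calc 2 ^ (k + 1) = 2 * 2 ^ k := by ring
      _ ≤ 2 * (2 * k).choose k := by omega
      _ ≤ (2 * (k + 1)).choose (k + 1) := by omega

private lemma key_fin {n a b : ℕ} (hb : 0 < b) (hba : b < a)
    (𝒜 : Finset (Finset (Fin n))) (hne : 𝒜.Nonempty)
    (h𝒜 : ∀ A ∈ 𝒜, A.card = a) :
    2 ^ b ≤ (𝒜.biUnion fun A => A.powersetCard b).card ∨
      𝒜.card ≤ 2 * (𝒜.biUnion fun A => A.powersetCard b).card := by
  obtain ⟨c, rfl⟩ : ∃ c, a = c + 1 := ⟨a - 1, by omega⟩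
  set a := c + 1 with ha
  have hsized : (𝒜 : Set (Finset (Fin n))).Sized a := fun A hA => h𝒜 A hA
  have hbU : (𝒜.biUnion fun A => A.powersetCard b) = ∂^[a - b] 𝒜 := by
    ext B
    simp only [mem_biUnion, mem_powersetCard, Finset.mem_shadow_iterate_iff_exists_sdiff]
    constructor
    · rintro ⟨A, hA, hBA, hcard⟩
      exact ⟨A, hA, hBA, by rw [card_sdiff_of_subset hBA, h𝒜 A hA, hcard]⟩
    · rintro ⟨A, hA, hBA, hcard⟩
      refine ⟨A, hA, hBA, ?_⟩
      have h1 := card_sdiff_of_subset hBA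
      have h2 := h𝒜 A hA
      have h3 := card_le_card hBA
      omega
  have hcard_pos : 0 < 𝒜.card := card_pos.2 hne
  have han : a ≤ n := by
    obtain ⟨A, hA⟩ := hne
    have := card_le_card (subset_univ A)
    rw [h𝒜 A hA, card_univ, Fintype.card_fin] at this
    exact this
  set P : ℕ → Prop := fun k => Nat.choose k a ≤ 𝒜.card with hP
  have hPa : P a := by simp only [hP, Nat.choose_self]; omega
  set k := Nat.findGreatest P (a + 𝒜.card) with hk
  have hak : a ≤ k := Nat.le_findGreatest (by omega) hPa
  have hPk : P k := Nat.findGreatest_spec (m := a) (by omega) hPa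
  have hbound : ¬ P (a + 𝒜.card) := by
    simp only [hP, not_le]
    have h1 : (a + 𝒜.card).choose a = (a + 𝒜.card).choose 𝒜.card := by
      have := Nat.choose_symm (n := a + 𝒜.card) (k := a) (by omega)
      simpa [show a + 𝒜.card - a = 𝒜.card by omega] using this.symm
    have h2 : (𝒜.card + 1).choose 𝒜.card ≤ (a + 𝒜.card).choose 𝒜.card :=
      Nat.choose_le_choose _ (by omega)
    have h3 : (𝒜.card + 1).choose 𝒜.card = 𝒜.card + 1 := Nat.choose_succ_self_right _
    omega
  have hle : k ≤ a + 𝒜.card := Nat.findGreatest_le (P := P) (a + 𝒜.card)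
  have hklt : k < a + 𝒜.card := by
    rcases lt_or_eq_of_le hle with h | h
    · exact h
    · exact absurd (h ▸ hPk) hbound
  have hnotPk1 : ¬ P (k + 1) :=
    Nat.findGreatest_is_greatest (P := P) (n := a + 𝒜.card) (by omega) (by omega)
  have hkn : k ≤ n := by
    by_contra h
    push_neg at h
    have h1 : 𝒜.card ≤ Nat.choose n a := by
      have hsub : 𝒜 ⊆ (univ : Finset (Fin n)).powersetCard a := fun A hA =>
        mem_powersetCard.2 ⟨subset_univ A, h𝒜 A hA⟩
      have := card_le_card hsub
      rwa [card_powersetCard, card_univ, Fintype.card_fin] at this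
    have h2 : Nat.choose n a < Nat.choose (n + 1) a := by
      have hc : Nat.choose (n + 1) (c + 1) = Nat.choose n c + Nat.choose n (c + 1) :=
        Nat.choose_succ_succ n c
      have hpos : 0 < Nat.choose n c := Nat.choose_pos (by omega)
      rw [ha]
      omega
    have h3 : Nat.choose (n + 1) a ≤ Nat.choose k a := Nat.choose_le_choose a (by omega)
    have h4 : Nat.choose k a ≤ 𝒜.card := hPk
    omega
  have hkk : Nat.choose k b ≤ (∂^[a - b] 𝒜).card := by
    have := Finset.kruskal_katona_lovasz_form (i := a - b) (r := a) (k := k)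
      (Nat.sub_le a b) hak hkn hsized hPk
    rw [Nat.sub_sub_self hba.le] at this
    convert this using 3
  rw [hbU]
  rcases le_or_gt (2 * b) k with h2b | h2b
  · left
    calc 2 ^ b ≤ (2 * b).choose b := two_pow_le_central_choose b
      _ ≤ k.choose b := Nat.choose_le_choose b h2b
      _ ≤ _ := hkk
  · right
    have h1 : 𝒜.card + 1 ≤ Nat.choose (k + 1) a := by
      simp only [hP, not_le] at hnotPk1
      omega
    have h2 : Nat.choose (k + 1) a = Nat.choose k c + Nat.choose k (c + 1) :=
      Nat.choose_succ_succ k c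
    have h3 : Nat.choose k a ≤ Nat.choose k b := choose_anti hba.le (by omega)
    have h4 : Nat.choose k c ≤ Nat.choose k b := choose_anti (by omega) (by omega)
    rw [ha] at h1 h3
    omega

/-- Kruskal–Katona corollary: if `F` is a family of `a`-element sets and `a ≥ b > 0`,
then the `b`-shadow of `F` has size at least `min (|F|/2) (2^b)`. -/
theorem stmt_3 {α : Type*} [DecidableEq α] (a b : ℕ) (hb : 0 < b) (hba : b ≤ a)
    (F : Finset (Finset α)) (hF : ∀ A ∈ F, A.card = a) :
    min ((F.card : ℝ) / 2) (2 ^ b) ≤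
      (((F.biUnion fun A => A.powersetCard b).card : ℕ) : ℝ) := by
  classical
  have hclaim : 2 ^ b ≤ (F.biUnion fun A => A.powersetCard b).card ∨
      F.card ≤ 2 * (F.biUnion fun A => A.powersetCard b).card := by
    rcases hba.eq_or_lt with rfl | hlt
    · -- a = b : the family is contained in its own "shadow"
      right
      have hsub : F ⊆ F.biUnion fun A => A.powersetCard b := fun A hA =>
        mem_biUnion.2 ⟨A, hA, mem_powersetCard.2 ⟨Finset.Subset.refl _, hF A hA⟩⟩
      have := card_le_card hsub
      omega
    · rcases F.eq_empty_or_nonempty with rfl | hne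
      · right; simp
      -- transfer to `Fin n`
      set U : Finset α := F.sup id with hU
      have hAU : ∀ A ∈ F, A ⊆ U := fun A hA => le_sup (f := id) hA
      set n := U.card with hn
      obtain ⟨e⟩ : Nonempty ({x // x ∈ U} ≃ Fin n) :=
        ⟨Fintype.equivFinOfCardEq (by simp [Fintype.card_coe, hn])⟩
      set π : Finset α → Finset (Fin n) :=
        fun A => (A.subtype (· ∈ U)).map e.toEmbedding with hπ
      set ρ : Finset (Fin n) → Finset α :=
        fun B => (B.map e.symm.toEmbedding).map (Function.Embedding.subtype _) with hρ
      have hρcard : ∀ B, (ρ B).card = B.card := by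
        intro B; simp [hρ]
      have hρπ : ∀ A, A ⊆ U → ρ (π A) = A := by
        intro A hA
        have h1 : ((A.subtype (· ∈ U)).map e.toEmbedding).map e.symm.toEmbedding
            = A.subtype (· ∈ U) := by
          rw [Finset.map_map]
          ext x
          simp [Function.Embedding.trans]
        simp only [hρ, hπ, h1]
        exact subtype_map_of_mem (fun x hx => hA hx)
      have hπcard : ∀ A ∈ F, (π A).card = A.card := by
        intro A hA
        rw [← hρcard (π A), hρπ A (hAU A hA)]
      set F' : Finset (Finset (Fin n)) := F.image π with hF'
      have hF'card : F'.card = F.card := card_image_of_injOn (fun A hA A' hA' h => by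
        rw [← hρπ A (hAU A hA), ← hρπ A' (hAU A' hA'), h])
      have hF'sized : ∀ A' ∈ F', A'.card = a := by
        intro A' hA'
        obtain ⟨A, hA, rfl⟩ := mem_image.1 hA'
        rw [hπcard A hA]; exact hF A hA
      have hF'ne : F'.Nonempty := hne.image π
      have hkey := key_fin hb hlt F' hF'ne hF'sized
      have hS'S : (F'.biUnion fun A => A.powersetCard b).card
          ≤ (F.biUnion fun A => A.powersetCard b).card := by
        apply card_le_card_of_injOn ρ
        · intro B hB
          obtain ⟨A', hA', hB'⟩ := mem_biUnion.1 hB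
          obtain ⟨A, hA, rfl⟩ := mem_image.1 hA'
          obtain ⟨hBA, hBcard⟩ := mem_powersetCard.1 hB'
          refine mem_biUnion.2 ⟨A, hA, mem_powersetCard.2 ⟨?_, by rw [hρcard]; exact hBcard⟩⟩
          rw [← hρπ A (hAU A hA)]
          simp only [hρ, hπ]
          exact map_subset_map.2 (map_subset_map.2 hBA)
        · intro B _ B' _ h
          simp only [hρ] at h
          exact Finset.map_injective _ (Finset.map_injective _ h)
      rcases hkey with h | h
      · left; omega
      · right; omega
  rcases hclaim with h | h
  · refine le_trans (min_le_right _ _) ?_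
    exact_mod_cast h
  · refine le_trans (min_le_left _ _) ?_
    rw [div_le_iff₀ (by norm_num : (0:ℝ) < 2)]
    calc (F.card : ℝ) ≤ ((2 * (F.biUnion fun A => A.powersetCard b).card : ℕ) : ℝ) := by
          exact_mod_cast h
      _ = _ := by push_cast; ring
end

section
/- Let M be a positive integer, X and Y arbitrary sets, and f_1, ..., f_M : X → Y pairwise distinct functions. Then there exist subsets X_1, ..., X_M of X, each of size at most log_2 M, such that for all i ≠ j, the restrictions of f_i and f_j to X_i ∪ X_j are different. -/
open Classical in
lemma aux_witness {X Y : Type*} :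
    ∀ n (S : Finset (X → Y)), S.card ≤ n →
    ∃ W : (X → Y) → Set X,
      (∀ g ∈ S, (W g).Finite ∧ ((W g).ncard : ℝ) ≤ Real.logb 2 S.card) ∧
      ∀ g ∈ S, ∀ h ∈ S, g ≠ h → ∃ x ∈ W g ∪ W h, g x ≠ h x := by
  intro n
  induction n with
  | zero =>
    intro S hS
    refine ⟨fun _ => ∅, fun g hg => ?_, fun g hg h hh hne => ?_⟩
    · simp at hS; simp [hS] at hg
    · simp at hS; simp [hS] at hg
  | succ n ih =>
    intro S hS
    by_cases hcard : S.card ≤ 1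
    · refine ⟨fun _ => ∅, fun g hg => ?_, fun g hg h hh hne => ?_⟩
      · refine ⟨Set.finite_empty, ?_⟩
        simp only [Set.ncard_empty, Nat.cast_zero]
        apply Real.logb_nonneg one_lt_two
        exact_mod_cast Nat.one_le_cast.mpr (Finset.card_pos.mpr ⟨g, hg⟩)
      · exact absurd (Finset.card_le_one.mp hcard g hg h hh) hne
    -- S has at least two elements: find g0 h0 ∈ S distinct, and x with g0 x ≠ h0 x
    push_neg at hcard
    obtain ⟨g0, hg0, h0, hh0, hgh⟩ := Finset.one_lt_card.mp hcard
    obtain ⟨x, hx⟩ : ∃ x, g0 x ≠ h0 x := Function.ne_iff.mp hgh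
    set V : Finset Y := S.image (fun f' => f' x) with hV
    have hVne : V.Nonempty := ⟨g0 x, Finset.mem_image.mpr ⟨g0, hg0, rfl⟩⟩
    obtain ⟨ys, hysV, hmax⟩ := V.exists_max_image
      (fun y => (S.filter (fun f' => f' x = y)).card) hVne
    -- each group is strictly smaller than S
    have hlt : ∀ y ∈ V, (S.filter (fun f' => f' x = y)).card < S.card := by
      intro y hy
      apply Finset.card_lt_card
      constructor
      · exact Finset.filter_subset _ _
      · intro hsub
        rcases eq_or_ne (g0 x) y with h1 | h1
        · have h2 := (Finset.mem_filter.mp (hsub hh0)).2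
          exact hx (h1.trans h2.symm)
        · exact h1 (Finset.mem_filter.mp (hsub hg0)).2
    have hle : ∀ y : Y, (S.filter (fun f' => f' x = y)).card ≤ n := by
      intro y
      by_cases hy : y ∈ V
      · exact Nat.le_of_lt_succ (lt_of_lt_of_le (hlt y hy) hS)
      · have : S.filter (fun f' => f' x = y) = ∅ := by
          rw [Finset.filter_eq_empty_iff]
          intro f' hf' h
          exact hy (Finset.mem_image.mpr ⟨f', hf', h⟩)
        simp [this]
    have H : ∀ y : Y, ∃ W : (X → Y) → Set X,
        (∀ g ∈ S.filter (fun f' => f' x = y), (W g).Finite ∧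
          ((W g).ncard : ℝ) ≤ Real.logb 2 ((S.filter (fun f' => f' x = y)).card)) ∧
        ∀ g ∈ S.filter (fun f' => f' x = y), ∀ h ∈ S.filter (fun f' => f' x = y),
          g ≠ h → ∃ x' ∈ W g ∪ W h, g x' ≠ h x' :=
      fun y => ih _ (hle y)
    choose Wf hWf1 hWf2 using H
    refine ⟨fun g => Wf (g x) g ∪ (if g x = ys then (∅ : Set X) else {x}), ?_, ?_⟩
    · intro g hg
      have hgmem : g ∈ S.filter (fun f' => f' x = g x) :=
        Finset.mem_filter.mpr ⟨hg, rfl⟩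
      obtain ⟨hfin, hbound⟩ := hWf1 (g x) g hgmem
      have hgrp1 : 1 ≤ (S.filter (fun f' => f' x = g x)).card :=
        Finset.card_pos.mpr ⟨g, hgmem⟩
      by_cases hcase : g x = ys
      · simp only [if_pos hcase, Set.union_empty]
        refine ⟨hfin, hbound.trans ?_⟩
        apply Real.logb_le_logb_of_le one_lt_two (by exact_mod_cast hgrp1)
        exact_mod_cast Finset.card_le_card (Finset.filter_subset _ _)
      · simp only [if_neg hcase]
        refine ⟨hfin.union (Set.finite_singleton x), ?_⟩
        have h1 : (Wf (g x) g ∪ {x}).ncard ≤ (Wf (g x) g).ncard + 1 := by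
          simpa using Set.ncard_union_le (Wf (g x) g) {x}
        have h2 : ((Wf (g x) g).ncard : ℝ) + 1 ≤
            Real.logb 2 ((S.filter (fun f' => f' x = g x)).card) + 1 := by linarith
        have hgx : g x ∈ V := Finset.mem_image.mpr ⟨g, hg, rfl⟩
        have hdisj : Disjoint (S.filter (fun f' => f' x = g x))
            (S.filter (fun f' => f' x = ys)) := by
          rw [Finset.disjoint_left]
          intro a ha hb
          have e1 := (Finset.mem_filter.mp ha).2
          have e2 := (Finset.mem_filter.mp hb).2
          exact hcase (e1.symm.trans e2)
        have h2k : 2 * (S.filter (fun f' => f' x = g x)).card ≤ S.card := by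
          have hmax' := hmax (g x) hgx
          have hcup := Finset.card_union_of_disjoint hdisj
          have hsub : (S.filter (fun f' => f' x = g x)) ∪
              (S.filter (fun f' => f' x = ys)) ⊆ S :=
            Finset.union_subset (Finset.filter_subset _ _) (Finset.filter_subset _ _)
          have hle2 := Finset.card_le_card hsub
          rw [hcup] at hle2
          linarith
        have h3 : Real.logb 2 ((S.filter (fun f' => f' x = g x)).card) + 1 ≤
            Real.logb 2 S.card := by
          have hk : (0:ℝ) < ((S.filter (fun f' => f' x = g x)).card : ℝ) := by
            exact_mod_cast hgrp1
          rw [show (1:ℝ) = Real.logb 2 2 from (Real.logb_self_eq_one one_lt_two).symm,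
            ← Real.logb_mul (ne_of_gt hk) two_ne_zero]
          apply Real.logb_le_logb_of_le one_lt_two (by positivity)
          have h2k' : (S.filter (fun f' => f' x = g x)).card * 2 ≤ S.card := by
            rw [Nat.mul_comm] at h2k; exact h2k
          have : ((S.filter (fun f' => f' x = g x)).card : ℝ) * 2 ≤ (S.card : ℝ) := by
            exact_mod_cast h2k'
          linarith
        calc ((Wf (g x) g ∪ {x}).ncard : ℝ) ≤ (Wf (g x) g).ncard + 1 := by exact_mod_cast h1
          _ ≤ _ := by linarith
    · intro g hg h hh hne
      by_cases hsame : g x = h x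
      · have hgmem : g ∈ S.filter (fun f' => f' x = g x) :=
          Finset.mem_filter.mpr ⟨hg, rfl⟩
        have hhmem : h ∈ S.filter (fun f' => f' x = g x) :=
          Finset.mem_filter.mpr ⟨hh, hsame.symm⟩
        obtain ⟨x', hx', hne'⟩ := hWf2 (g x) g hgmem h hhmem hne
        refine ⟨x', ?_, hne'⟩
        rcases hx' with h1 | h1
        · exact Or.inl (Or.inl h1)
        · rw [hsame] at h1
          exact Or.inr (Or.inl h1)
      · rcases eq_or_ne (g x) ys with h1 | h1
        · have h2 : h x ≠ ys := fun h2 => hsame (h1.trans h2.symm)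
          refine ⟨x, Or.inr ?_, fun h3 => hsame h3⟩
          simp [h2]
        · refine ⟨x, Or.inl ?_, fun h3 => hsame h3⟩
          simp [h1]

/-- Pairwise distinct functions `f_1, …, f_M : X → Y` can be distinguished on witness
sets `X_1, …, X_M ⊆ X` of size at most `log₂ M`: for all `i ≠ j` the restrictions of
`f i` and `f j` to `X i ∪ X j` differ. -/
theorem stmt_4 {X Y : Type*} (M : ℕ) (hM : 0 < M) (f : Fin M → X → Y)
    (hf : ∀ i j : Fin M, i ≠ j → f i ≠ f j) :
    ∃ Xs : Fin M → Set X,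
      (∀ i, (Xs i).Finite ∧ ((Xs i).ncard : ℝ) ≤ Real.logb 2 M) ∧
      ∀ i j : Fin M, i ≠ j → ∃ x ∈ Xs i ∪ Xs j, f i x ≠ f j x := by
  classical
  have hinj : Function.Injective f := fun i j h => by
    by_contra hne; exact hf i j hne h
  set S : Finset (X → Y) := Finset.image f Finset.univ with hS
  have hcard : S.card = M := by
    rw [hS, Finset.card_image_of_injective _ hinj, Finset.card_univ, Fintype.card_fin]
  obtain ⟨W, hW1, hW2⟩ := aux_witness M S (le_of_eq hcard)
  refine ⟨fun i => W (f i), fun i => ?_, fun i j hij => ?_⟩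
  · have := hW1 (f i) (Finset.mem_image.mpr ⟨i, Finset.mem_univ i, rfl⟩)
    rwa [hcard] at this
  · exact hW2 (f i) (Finset.mem_image.mpr ⟨i, Finset.mem_univ i, rfl⟩)
      (f j) (Finset.mem_image.mpr ⟨j, Finset.mem_univ j, rfl⟩) (hf i j hij)
end

section
/- Let k, ℓ, M be positive integers with log_2 M + 1 ≤ k/4, and let P be a finite poset of height k+ℓ. If P contains at least M chains of length k+ℓ (i.e., maximum chains), then P contains at least exp(−2(ℓ−1)(log_2 M + 1)/k) · M · C(k+ℓ, k+1) chains of length k+1. -/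
open Finset
section Height
open scoped Classical
variable {P : Type*} [Fintype P] [PartialOrder P]

open Classical in
noncomputable def chainsTo (x : P) : Finset (Finset P) :=
  Finset.univ.filter (fun c : Finset P =>
    IsChain (· ≤ ·) (↑c : Set P) ∧ x ∈ c ∧ ∀ y ∈ c, y ≤ x)

noncomputable def ht (x : P) : ℕ := (chainsTo x).sup Finset.card

lemma le_ht {x : P} {d : Finset P} (hd : IsChain (· ≤ ·) (↑d : Set P))
    (hx : x ∈ d) (hall : ∀ y ∈ d, y ≤ x) : d.card ≤ ht x := by
  classical
  apply Finset.le_sup (f := Finset.card)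
  simp only [chainsTo, Finset.mem_filter, Finset.mem_univ, true_and]
  exact ⟨hd, hx, hall⟩

lemma ht_le {x : P} {n₀ : ℕ}
    (h : ∀ d : Finset P, IsChain (· ≤ ·) (↑d : Set P) → x ∈ d → (∀ y ∈ d, y ≤ x) → d.card ≤ n₀) :
    ht x ≤ n₀ := by
  classical
  apply Finset.sup_le
  intro d hd
  simp only [chainsTo, Finset.mem_filter] at hd
  exact h d hd.2.1 hd.2.2.1 hd.2.2.2
lemma ht_eq {n : ℕ}
    (hbound : ∀ c : Finset P, IsChain (· ≤ ·) (↑c : Set P) → c.card ≤ n)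
    {c : Finset P} (hc : IsChain (· ≤ ·) (↑c : Set P)) (hcard : c.card = n)
    {x : P} (hx : x ∈ c) : ht x = (c.filter (fun y => y ≤ x)).card := by
  classical
  apply le_antisymm
  · apply ht_le
    intro d hd hxd hall
    set u := c.filter (fun y => ¬ y ≤ x) with hu
    have hux : ∀ y ∈ u, x ≤ y ∧ ¬ y ≤ x := by
      intro y hy
      rw [hu, Finset.mem_filter] at hy
      obtain ⟨hyc, hyx⟩ := hy
      refine ⟨?_, hyx⟩
      rcases eq_or_ne y x with rfl | hne
      · exact absurd le_rfl hyx
      · rcases hc hyc hx hne with h | h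
        · exact absurd h hyx
        · exact h
    have hdisj : Disjoint d u := by
      rw [Finset.disjoint_left]
      intro a ha hau
      exact (hux a hau).2 (hall a ha)
    have hchain : IsChain (· ≤ ·) (↑(d ∪ u) : Set P) := by
      intro a ha b hb hab
      simp only [Finset.coe_union, Set.mem_union, Finset.mem_coe] at ha hb
      rcases ha with ha | ha <;> rcases hb with hb | hb
      · exact hd ha hb hab
      · exact Or.inl ((hall a ha).trans (hux b hb).1)
      · exact Or.inr ((hall b hb).trans (hux a ha).1)
      · exact hc (Finset.mem_filter.mp ha).1 (Finset.mem_filter.mp hb).1 hab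
    have h1 : d.card + u.card ≤ n := by
      rw [← Finset.card_union_of_disjoint hdisj]
      exact hbound _ hchain
    have h2 : (c.filter (fun y => y ≤ x)).card + u.card = n := by
      rw [hu, Finset.card_filter_add_card_filter_not, hcard]
    omega
  · apply le_ht
    · exact IsChain.mono (by exact_mod_cast Finset.filter_subset _ c) hc
    · exact Finset.mem_filter.mpr ⟨hx, le_rfl⟩
    · intro y hy; exact (Finset.mem_filter.mp hy).2

lemma ht_lt {n : ℕ}
    (hbound : ∀ c : Finset P, IsChain (· ≤ ·) (↑c : Set P) → c.card ≤ n)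
    {c : Finset P} (hc : IsChain (· ≤ ·) (↑c : Set P)) (hcard : c.card = n)
    {x y : P} (hx : x ∈ c) (hy : y ∈ c) (hxy : x < y) : ht x < ht y := by
  rw [ht_eq hbound hc hcard hx, ht_eq hbound hc hcard hy]
  apply Finset.card_lt_card
  rw [Finset.ssubset_iff_of_subset]
  · exact ⟨y, Finset.mem_filter.mpr ⟨hy, le_refl y⟩,
      fun hmem => absurd ((Finset.mem_filter.mp hmem).2) (not_le_of_gt hxy)⟩
  · intro z hz
    obtain ⟨hzc, hzx⟩ := Finset.mem_filter.mp hz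
    exact Finset.mem_filter.mpr ⟨hzc, hzx.trans hxy.le⟩

lemma ht_injOn {n : ℕ}
    (hbound : ∀ c : Finset P, IsChain (· ≤ ·) (↑c : Set P) → c.card ≤ n)
    {c : Finset P} (hc : IsChain (· ≤ ·) (↑c : Set P)) (hcard : c.card = n)
    {x y : P} (hx : x ∈ c) (hy : y ∈ c) (hxy : ht x = ht y) : x = y := by
  by_contra hne
  rcases hc hx hy hne with h | h
  · exact absurd hxy (Nat.ne_of_lt (ht_lt hbound hc hcard hx hy (lt_of_le_of_ne h hne)))
  · exact absurd hxy.symm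
      (Nat.ne_of_lt (ht_lt hbound hc hcard hy hx (lt_of_le_of_ne h (Ne.symm hne))))

lemma ht_mem_Icc {n : ℕ}
    (hbound : ∀ c : Finset P, IsChain (· ≤ ·) (↑c : Set P) → c.card ≤ n)
    {c : Finset P} (hc : IsChain (· ≤ ·) (↑c : Set P)) (hcard : c.card = n)
    {x : P} (hx : x ∈ c) : ht x ∈ Finset.Icc 1 n := by
  rw [Finset.mem_Icc, ht_eq hbound hc hcard hx]
  constructor
  · exact Finset.card_pos.mpr ⟨x, Finset.mem_filter.mpr ⟨hx, le_refl x⟩⟩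
  · calc (c.filter (fun y => y ≤ x)).card ≤ c.card := Finset.card_filter_le _ _
      _ = n := hcard

lemma ht_image {n : ℕ}
    (hbound : ∀ c : Finset P, IsChain (· ≤ ·) (↑c : Set P) → c.card ≤ n)
    {c : Finset P} (hc : IsChain (· ≤ ·) (↑c : Set P)) (hcard : c.card = n) :
    c.image ht = Finset.Icc 1 n := by
  apply Finset.eq_of_subset_of_card_le
  · intro i hi
    obtain ⟨x, hx, rfl⟩ := Finset.mem_image.mp hi
    exact ht_mem_Icc hbound hc hcard hx
  · rw [Nat.card_Icc]
    rw [Finset.card_image_of_injOn (fun x hx y hy => ht_injOn hbound hc hcard hx hy)]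
    omega

lemma ht_filter_eq_singleton {n : ℕ}
    (hbound : ∀ c : Finset P, IsChain (· ≤ ·) (↑c : Set P) → c.card ≤ n)
    {c : Finset P} (hc : IsChain (· ≤ ·) (↑c : Set P)) (hcard : c.card = n)
    {i : ℕ} (hi : i ∈ Finset.Icc 1 n) :
    ∃ x ∈ c, c.filter (fun y => ht y = i) = {x} := by
  have := ht_image hbound hc hcard
  rw [← this] at hi
  obtain ⟨x, hx, hxi⟩ := Finset.mem_image.mp hi
  refine ⟨x, hx, ?_⟩
  ext y
  simp only [Finset.mem_filter, Finset.mem_singleton]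
  constructor
  · rintro ⟨hyc, hyi⟩
    exact ht_injOn hbound hc hcard hyc hx (hyi.trans hxi.symm)
  · rintro rfl
    exact ⟨hx, hxi⟩
end Height

lemma witness {α β : Type*} [DecidableEq α] (n : ℕ) :
    ∀ V : Finset (α → β), V.card ≤ n →
    ∃ W : (α → β) → Finset α,
      (∀ f ∈ V, 2 ^ (W f).card ≤ V.card) ∧
      (∀ f ∈ V, ∀ i ∈ W f, ∃ g ∈ V, ∃ g' ∈ V, g i ≠ g' i) ∧
      (∀ f ∈ V, ∀ g ∈ V, f ≠ g → ∃ i ∈ W f ∪ W g, f i ≠ g i) := by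
  classical
  induction n using Nat.strong_induction_on with
  | _ n IH =>
  intro V hVn
  by_cases hV1 : V.card ≤ 1
  · refine ⟨fun _ => ∅, ?_, by simp, ?_⟩
    · intro f hf
      simpa using Finset.card_pos.mpr ⟨f, hf⟩
    · intro f hf g hg hfg
      exact absurd (Finset.card_le_one.mp hV1 f hf g hg) hfg
  · push_neg at hV1
    obtain ⟨f₀, hf₀, g₀, hg₀, hfg₀⟩ := Finset.one_lt_card.mp hV1
    have hex : ∃ i₀, f₀ i₀ ≠ g₀ i₀ := by
      by_contra h
      push_neg at h
      exact hfg₀ (funext h)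
    obtain ⟨i₀, hi₀⟩ := hex
    set cls : β → Finset (α → β) := fun a => V.filter (fun f => f i₀ = a) with hcls
    have hclsV : ∀ a, cls a ⊆ V := fun a => Finset.filter_subset _ _
    have hclscard : ∀ a, (cls a).card < V.card := by
      intro a
      apply Finset.card_lt_card
      rw [Finset.ssubset_iff_of_subset (hclsV a)]
      rcases eq_or_ne (f₀ i₀) a with rfl | hne
      · refine ⟨g₀, hg₀, ?_⟩
        simp only [hcls, Finset.mem_filter]
        rintro ⟨-, h⟩
        exact hi₀ h.symm
      · refine ⟨f₀, hf₀, ?_⟩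
        simp only [hcls, Finset.mem_filter]
        rintro ⟨-, h⟩
        exact hne h
    have hIH : ∀ a, ∃ W : (α → β) → Finset α,
        (∀ f ∈ cls a, 2 ^ (W f).card ≤ (cls a).card) ∧
        (∀ f ∈ cls a, ∀ i ∈ W f, ∃ g ∈ cls a, ∃ g' ∈ cls a, g i ≠ g' i) ∧
        (∀ f ∈ cls a, ∀ g ∈ cls a, f ≠ g → ∃ i ∈ W f ∪ W g, f i ≠ g i) :=
      fun a => IH (cls a).card (lt_of_lt_of_le (hclscard a) hVn) (cls a) le_rfl
    choose Wf hW1 hW2 hW3 using hIH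
    have hvne : (V.image (fun f => f i₀)).Nonempty := ⟨f₀ i₀, Finset.mem_image_of_mem _ hf₀⟩
    obtain ⟨a₀, ha₀mem, ha₀max⟩ :=
      Finset.exists_max_image (V.image (fun f => f i₀)) (fun a => (cls a).card) hvne
    set Wn : (α → β) → Finset α := fun f => if f i₀ = a₀ then Wf a₀ f else insert i₀ (Wf (f i₀) f)
      with hWn
    have hWeq : ∀ f, Wn f = if f i₀ = a₀ then Wf a₀ f else insert i₀ (Wf (f i₀) f) :=
      fun f => rfl
    refine ⟨Wn, ?_, ?_, ?_⟩
    · intro f hf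
      have hfc : f ∈ cls (f i₀) := Finset.mem_filter.mpr ⟨hf, rfl⟩
      rw [hWeq]
      by_cases h : f i₀ = a₀
      · rw [if_pos h]
        calc 2 ^ (Wf a₀ f).card ≤ (cls a₀).card := hW1 a₀ f (h ▸ hfc)
          _ ≤ V.card := Finset.card_le_card (hclsV a₀)
      · rw [if_neg h]
        have h1 : (insert i₀ (Wf (f i₀) f)).card ≤ (Wf (f i₀) f).card + 1 :=
          Finset.card_insert_le _ _
        have h2 : (2:ℕ) ^ (insert i₀ (Wf (f i₀) f)).card ≤ 2 * 2 ^ (Wf (f i₀) f).card := by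
          calc (2:ℕ) ^ (insert i₀ (Wf (f i₀) f)).card ≤ 2 ^ ((Wf (f i₀) f).card + 1) :=
                Nat.pow_le_pow_right (by norm_num) h1
            _ = 2 * 2 ^ (Wf (f i₀) f).card := by ring
        have h3 : 2 * 2 ^ (Wf (f i₀) f).card ≤ 2 * (cls (f i₀)).card := by
          have := hW1 (f i₀) f hfc
          omega
        have h4 : (cls (f i₀)).card ≤ (cls a₀).card :=
          ha₀max (f i₀) (Finset.mem_image_of_mem _ hf)
        have h5 : (cls (f i₀)).card + (cls a₀).card ≤ V.card := by
          rw [← Finset.card_union_of_disjoint]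
          · exact Finset.card_le_card (Finset.union_subset (hclsV _) (hclsV _))
          · rw [Finset.disjoint_left]
            intro g hg hg'
            have e1 := (Finset.mem_filter.mp hg).2
            have e2 := (Finset.mem_filter.mp hg').2
            exact h (e1.symm.trans e2)
        omega
    · intro f hf i hi
      have hfc : f ∈ cls (f i₀) := Finset.mem_filter.mpr ⟨hf, rfl⟩
      rw [hWeq] at hi
      by_cases h : f i₀ = a₀
      rotate_left
      rw [if_neg h] at hi
      rotate_left
      rw [if_pos h] at hi
      · obtain ⟨g, hg, g', hg', hne⟩ := hW2 a₀ f (h ▸ hfc) i hi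
        exact ⟨g, hclsV _ hg, g', hclsV _ hg', hne⟩
      · rcases Finset.mem_insert.mp hi with rfl | hi'
        · exact ⟨f₀, hf₀, g₀, hg₀, hi₀⟩
        · obtain ⟨g, hg, g', hg', hne⟩ := hW2 (f i₀) f hfc i hi'
          exact ⟨g, hclsV _ hg, g', hclsV _ hg', hne⟩
    · intro f hf g hg hfg
      have hfc : f ∈ cls (f i₀) := Finset.mem_filter.mpr ⟨hf, rfl⟩
      have hgc : g ∈ cls (g i₀) := Finset.mem_filter.mpr ⟨hg, rfl⟩
      by_cases hval : f i₀ = g i₀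
      · by_cases h : f i₀ = a₀
        · have hg' : g i₀ = a₀ := by rw [← hval]; exact h
          obtain ⟨i, hiW, hine⟩ := hW3 a₀ f (h ▸ hfc) g (hg' ▸ hgc) hfg
          refine ⟨i, ?_, hine⟩
          rw [hWeq f, hWeq g, if_pos h, if_pos hg']
          exact hiW
        · have hg' : ¬ g i₀ = a₀ := by rw [← hval]; exact h
          obtain ⟨i, hiW, hine⟩ := hW3 (f i₀) f hfc g (hval ▸ hgc) hfg
          refine ⟨i, ?_, hine⟩
          rw [hWeq f, hWeq g, if_neg h, if_neg hg']
          rw [Finset.mem_union] at hiW ⊢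
          rcases hiW with h' | h'
          · exact Or.inl (Finset.mem_insert_of_mem h')
          · exact Or.inr (Finset.mem_insert_of_mem (hval ▸ h'))
      · refine ⟨i₀, ?_, hval⟩
        rw [hWeq f, hWeq g, Finset.mem_union]
        by_cases h : f i₀ = a₀
        · have hg' : ¬ g i₀ = a₀ := fun hh => hval (h.trans hh.symm)
          exact Or.inr (by rw [if_neg hg']; exact Finset.mem_insert_self _ _)
        · exact Or.inl (by rw [if_neg h]; exact Finset.mem_insert_self _ _)

lemma card_between {γ : Type*} [DecidableEq γ] (A B : Finset γ) (hAB : A ⊆ B)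
    (r : ℕ) (hr : A.card ≤ r) :
    (B.powerset.filter (fun S => A ⊆ S ∧ S.card = r)).card
      = (B.card - A.card).choose (r - A.card) := by
  rw [← Finset.card_sdiff_of_subset hAB, ← Finset.card_powersetCard]
  apply Finset.card_bij' (fun S _ => S \ A) (fun D _ => A ∪ D)
  · intro S hS
    simp only [Finset.mem_filter, Finset.mem_powerset] at hS
    obtain ⟨hSB, hAS, hScard⟩ := hS
    rw [Finset.mem_powersetCard]
    exact ⟨Finset.sdiff_subset_sdiff hSB (le_refl A), by rw [Finset.card_sdiff_of_subset hAS, hScard]⟩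
  · intro D hD
    rw [Finset.mem_powersetCard] at hD
    obtain ⟨hDsub, hDcard⟩ := hD
    have hdisj : Disjoint A D := by
      rw [Finset.disjoint_left]
      intro a ha haD
      exact (Finset.mem_sdiff.mp (hDsub haD)).2 ha
    simp only [Finset.mem_filter, Finset.mem_powerset]
    refine ⟨Finset.union_subset hAB (hDsub.trans Finset.sdiff_subset), Finset.subset_union_left, ?_⟩
    rw [Finset.card_union_of_disjoint hdisj, hDcard]
    omega
  · intro S hS
    simp only [Finset.mem_filter, Finset.mem_powerset] at hS
    exact Finset.union_sdiff_of_subset hS.2.1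
  · intro D hD
    rw [Finset.mem_powersetCard] at hD
    apply Finset.union_sdiff_cancel_left
    rw [Finset.disjoint_left]
    intro a ha haD
    exact (Finset.mem_sdiff.mp (hD.1 haD)).2 ha

lemma nat_id (b r : ℕ) : (b + 1) * (b + r + 1).choose r = (b + r + 1) * ((b + r).choose r) := by
  have h1 := Nat.choose_mul_factorial_mul_factorial (show r ≤ b + r + 1 by omega)
  have h2 := Nat.choose_mul_factorial_mul_factorial (show r ≤ b + r by omega)
  have e1 : b + r + 1 - r = b + 1 := by omega
  have e2 : b + r - r = b := by omega
  rw [e1] at h1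
  rw [e2] at h2
  have hpos : 0 < r.factorial * b.factorial :=
    Nat.mul_pos (Nat.factorial_pos r) (Nat.factorial_pos b)
  apply Nat.eq_of_mul_eq_mul_right hpos
  calc (b + 1) * (b + r + 1).choose r * (r.factorial * b.factorial)
      = ((b + r + 1).choose r * r.factorial) * ((b + 1) * b.factorial) := by ring
    _ = ((b + r + 1).choose r * r.factorial) * (b + 1).factorial := by rw [Nat.factorial_succ]
    _ = (b + r + 1).factorial := h1
    _ = (b + r + 1) * (b + r).factorial := Nat.factorial_succ _
    _ = (b + r + 1) * ((b + r).choose r * r.factorial * b.factorial) := by rw [h2]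
    _ = (b + r + 1) * ((b + r).choose r) * (r.factorial * b.factorial) := by ring

lemma choose_ratio_step (b r : ℕ) (c₀ : ℝ) (hc₀ : (r : ℝ) / (b + 1) ≤ c₀) :
    ((b + r + 1).choose r : ℝ) ≤ Real.exp c₀ * ((b + r).choose r : ℝ) := by
  have hb1 : (0 : ℝ) < (b : ℝ) + 1 := by positivity
  have hid : ((b : ℝ) + 1) * ((b + r + 1).choose r : ℝ)
      = ((b : ℝ) + r + 1) * ((b + r).choose r : ℝ) := by
    exact_mod_cast congrArg (Nat.cast : ℕ → ℝ) (nat_id b r)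
  have hexp : 1 + (r : ℝ) / (b + 1) ≤ Real.exp c₀ := by
    have h1 := Real.add_one_le_exp ((r : ℝ) / (b + 1))
    have h2 : Real.exp ((r : ℝ) / (b + 1)) ≤ Real.exp c₀ := Real.exp_le_exp.mpr hc₀
    linarith
  have hCpos : (0 : ℝ) ≤ ((b + r).choose r : ℝ) := Nat.cast_nonneg _
  have key : ((b + r + 1).choose r : ℝ) = (1 + (r : ℝ) / (b + 1)) * ((b + r).choose r : ℝ) := by
    have : (1 + (r : ℝ) / (b + 1)) = ((b : ℝ) + r + 1) / ((b : ℝ) + 1) := by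
      field_simp
      ring
    rw [this, div_mul_eq_mul_div, ← hid, mul_comm, mul_div_assoc, div_self (ne_of_gt hb1), mul_one]
  rw [key]
  exact mul_le_mul_of_nonneg_right hexp hCpos

lemma choose_ratio (m r : ℕ) (hrm : r ≤ m) (c₀ : ℝ) (hc₀0 : 0 ≤ c₀)
    (hc₀ : (r : ℝ) / ((m : ℝ) + 1 - r) ≤ c₀) :
    ∀ j : ℕ, ((m + j).choose r : ℝ) ≤ Real.exp (j * c₀) * ((m.choose r : ℕ) : ℝ) := by
  intro j
  induction j with
  | zero => simp
  | succ j ihj =>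
    have hmr : (m : ℝ) + 1 - r = ((m - r : ℕ) : ℝ) + 1 := by
      rw [Nat.cast_sub hrm]; ring
    have hstep := choose_ratio_step (m - r + j) r c₀ ?_
    · have harith : m + (j + 1) = (m - r + j) + r + 1 := by omega
      have harith2 : m + j = (m - r + j) + r := by omega
      calc ((m + (j + 1)).choose r : ℝ) = (((m - r + j) + r + 1).choose r : ℝ) := by
            rw [harith]
        _ ≤ Real.exp c₀ * (((m - r + j) + r).choose r : ℝ) := hstep
        _ = Real.exp c₀ * ((m + j).choose r : ℝ) := by rw [← harith2]
        _ ≤ Real.exp c₀ * (Real.exp (j * c₀) * ((m.choose r : ℕ) : ℝ)) := by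
            apply mul_le_mul_of_nonneg_left ihj (le_of_lt (Real.exp_pos c₀))
        _ = Real.exp ((j + 1 : ℕ) * c₀) * ((m.choose r : ℕ) : ℝ) := by
            rw [← mul_assoc, ← Real.exp_add]
            push_cast
            ring_nf
    · calc (r : ℝ) / ((m - r + j : ℕ) + 1) ≤ (r : ℝ) / ((m : ℝ) + 1 - r) := by
            apply div_le_div_of_nonneg_left (Nat.cast_nonneg r) ?_ ?_
            · rw [hmr]; positivity
            · rw [hmr]; push_cast; linarith [(Nat.cast_nonneg j : (0:ℝ) ≤ (j:ℝ))]
        _ ≤ c₀ := hc₀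

/-- If a finite poset of height `k+ℓ` contains at least `M` maximum chains
(of `k+ℓ` elements), and `log₂ M + 1 ≤ k/4`, then it contains at least
`exp(−2(ℓ−1)(log₂ M + 1)/k) · M · C(k+ℓ, k+1)` chains of `k+1` elements. -/
theorem stmt_5 {P : Type*} [Fintype P] [PartialOrder P] (k ℓ M : ℕ)
    (hk : 0 < k) (hℓ : 0 < ℓ) (hM : 0 < M)
    (hlog : Real.logb 2 M + 1 ≤ (k : ℝ) / 4)
    (hheight : (∃ c : Finset P, c.card = k + ℓ ∧ IsChain (· ≤ ·) (↑c : Set P)) ∧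
      ∀ c : Finset P, IsChain (· ≤ ·) (↑c : Set P) → c.card ≤ k + ℓ)
    (hchains : M ≤ Set.ncard
      {c : Finset P | c.card = k + ℓ ∧ IsChain (· ≤ ·) (↑c : Set P)}) :
    Real.exp (-(2 * ((ℓ : ℝ) - 1) * (Real.logb 2 M + 1)) / k) * M *
        Nat.choose (k + ℓ) (k + 1) ≤
      (Set.ncard {c : Finset P | c.card = k + 1 ∧ IsChain (· ≤ ·) (↑c : Set P)} : ℝ) := by
  classical
  set n := k + ℓ with hn
  have hbound := hheight.2
  set L : ℝ := Real.logb 2 M with hL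
  -- basic real facts
  have hLnn : 0 ≤ L := Real.logb_nonneg one_lt_two (by exact_mod_cast hM)
  have hk4 : (4 : ℝ) ≤ (k : ℝ) := by linarith
  set s₀ : ℕ := Nat.log 2 M with hs₀
  have h2s₀ : (2 : ℕ) ^ s₀ ≤ M := Nat.pow_log_le_self 2 hM.ne'
  have hsL : (s₀ : ℝ) ≤ L := by
    have h1 : ((2 : ℝ)) ^ (s₀ : ℕ) ≤ (M : ℝ) := by exact_mod_cast h2s₀
    have h2 : Real.log ((2 : ℝ) ^ (s₀ : ℕ)) ≤ Real.log M :=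
      Real.log_le_log (by positivity) h1
    rw [Real.log_pow] at h2
    rw [hL, Real.logb, le_div_iff₀ (Real.log_pos one_lt_two)]
    exact_mod_cast h2
  have hs4 : (s₀ : ℝ) ≤ (k : ℝ) / 4 - 1 := by linarith
  have hs0k : s₀ ≤ k := by
    have : (s₀ : ℝ) ≤ (k : ℝ) := by linarith
    exact_mod_cast this
  have hs0n : s₀ ≤ n := by omega
  have hs0k1 : s₀ ≤ k + 1 := by omega
  -- finset of maximal chains
  set Kmax : Finset (Finset P) :=
    Finset.univ.filter (fun c => c.card = n ∧ IsChain (· ≤ ·) (↑c : Set P)) with hKmax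
  have hMK : M ≤ Kmax.card := by
    have hset : {c : Finset P | c.card = k + ℓ ∧ IsChain (· ≤ ·) (↑c : Set P)}
        = ↑Kmax := by
      ext c; simp [hKmax, hn]
    rw [hset, Set.ncard_coe_finset] at hchains
    exact hchains
  obtain ⟨F, hFsub, hFcard⟩ := Finset.exists_subset_card_eq hMK
  have hFc : ∀ c ∈ F, c.card = n ∧ IsChain (· ≤ ·) (↑c : Set P) := by
    intro c hc
    have := hFsub hc
    simpa [hKmax] using this
  -- encode chains as functions
  set fC : Finset P → (ℕ → Finset P) :=
    fun c => fun i => c.filter (fun x => ht x = i) with hfC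
  have hinj : ∀ c ∈ F, ∀ c' ∈ F, fC c = fC c' → c = c' := by
    intro c _ c' _ h
    ext x
    constructor
    · intro hx
      have : x ∈ fC c (ht x) := Finset.mem_filter.mpr ⟨hx, rfl⟩
      rw [h] at this
      exact (Finset.mem_filter.mp this).1
    · intro hx
      have : x ∈ fC c' (ht x) := Finset.mem_filter.mpr ⟨hx, rfl⟩
      rw [← h] at this
      exact (Finset.mem_filter.mp this).1
  set V : Finset (ℕ → Finset P) := F.image fC with hV
  have hVcard : V.card = M := by
    rw [hV, Finset.card_image_of_injOn, hFcard]
    intro c hc c' hc' h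
    exact hinj c hc c' hc' h
  obtain ⟨W, hW1, hW2, hW3⟩ := witness (α := ℕ) (β := Finset P) V.card V le_rfl
  -- empty positions outside Icc 1 n
  have hempty : ∀ c ∈ F, ∀ i : ℕ, i ∉ Finset.Icc 1 n → fC c i = ∅ := by
    intro c hc i hi
    rw [Finset.eq_empty_iff_forall_notMem]
    intro x hx
    obtain ⟨hxc, hxi⟩ := Finset.mem_filter.mp hx
    exact hi (hxi ▸ ht_mem_Icc hbound (hFc c hc).2 (hFc c hc).1 hxc)
  have hWIcc : ∀ c ∈ F, W (fC c) ⊆ Finset.Icc 1 n := by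
    intro c hc i hi
    obtain ⟨g, hg, g', hg', hne⟩ := hW2 (fC c) (Finset.mem_image_of_mem fC hc) i hi
    obtain ⟨c₁, hc₁, rfl⟩ := Finset.mem_image.mp hg
    obtain ⟨c₂, hc₂, rfl⟩ := Finset.mem_image.mp hg'
    by_contra hiI
    exact hne ((hempty c₁ hc₁ i hiI).trans (hempty c₂ hc₂ i hiI).symm)
  have hwM : ∀ c ∈ F, 2 ^ (W (fC c)).card ≤ M := by
    intro c hc
    have := hW1 (fC c) (Finset.mem_image_of_mem fC hc)
    rwa [hVcard] at this
  have hws : ∀ c ∈ F, (W (fC c)).card ≤ s₀ := by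
    intro c hc
    exact (Nat.le_log_iff_pow_le (by norm_num) hM.ne').mpr (hwM c hc)
  -- witness element sets
  set A : Finset P → Finset P := fun c => c.filter (fun x => ht x ∈ W (fC c)) with hA
  have hAsub : ∀ c, A c ⊆ c := fun c => Finset.filter_subset _ _
  have hAcard : ∀ c ∈ F, (A c).card = (W (fC c)).card := by
    intro c hc
    have himg : (A c).image ht = W (fC c) := by
      apply subset_antisymm
      · intro i hi
        obtain ⟨x, hx, rfl⟩ := Finset.mem_image.mp hi
        exact (Finset.mem_filter.mp hx).2
      · intro i hi
        obtain ⟨x, hxc, hsing⟩ := ht_filter_eq_singleton hbound (hFc c hc).2 (hFc c hc).1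
          (hWIcc c hc hi)
        have hxmem : x ∈ c.filter (fun y => ht y = i) := by rw [hsing]; exact Finset.mem_singleton_self x
        have hxi : ht x = i := (Finset.mem_filter.mp hxmem).2
        exact Finset.mem_image.mpr ⟨x, Finset.mem_filter.mpr ⟨hxc, hxi ▸ hi⟩, hxi⟩
    rw [← himg]
    rw [Finset.card_image_of_injOn]
    intro x hx y hy hxy
    exact ht_injOn hbound (hFc c hc).2 (hFc c hc).1 (hAsub c hx) (hAsub c hy) hxy
  -- the collections of (k+1)-subchains
  set N : Finset P → Finset (Finset P) :=
    fun c => c.powerset.filter (fun S => A c ⊆ S ∧ S.card = k + 1) with hN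
  have hNcard : ∀ c ∈ F, (N c).card
      = (n - (W (fC c)).card).choose (k + 1 - (W (fC c)).card) := by
    intro c hc
    rw [hN]
    have := card_between (A c) c (hAsub c) (k + 1)
      (by rw [hAcard c hc]; have h1 := hws c hc; omega)
    rw [this, hAcard c hc, (hFc c hc).1]
  have hNlb : ∀ c ∈ F, (n - s₀).choose (ℓ - 1) ≤ (N c).card := by
    intro c hc
    rw [hNcard c hc]
    have hw := hws c hc
    have hwk1 : (W (fC c)).card ≤ k + 1 := by omega
    have hsymm : (n - (W (fC c)).card).choose (k + 1 - (W (fC c)).card)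
        = (n - (W (fC c)).card).choose (ℓ - 1) := by
      have e : k + 1 - (W (fC c)).card = (n - (W (fC c)).card) - (ℓ - 1) := by omega
      rw [e]
      exact Nat.choose_symm (by omega)
    rw [hsymm]
    exact Nat.choose_le_choose (ℓ - 1) (by omega)
  -- disjointness
  have hdisjN : ∀ c ∈ F, ∀ c' ∈ F, c ≠ c' → Disjoint (N c) (N c') := by
    intro c hc c' hc' hne
    rw [Finset.disjoint_left]
    intro S hS hS'
    simp only [hN, Finset.mem_filter, Finset.mem_powerset] at hS hS'
    obtain ⟨hSc, hAS, hScard⟩ := hS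
    obtain ⟨hSc', hAS', _⟩ := hS'
    have hfne : fC c ≠ fC c' := fun h => hne (hinj c hc c' hc' h)
    obtain ⟨i, hiW, hine⟩ := hW3 (fC c) (Finset.mem_image_of_mem fC hc)
      (fC c') (Finset.mem_image_of_mem fC hc') hfne
    have hiI : i ∈ Finset.Icc 1 n := by
      rcases Finset.mem_union.mp hiW with h | h
      · exact hWIcc c hc h
      · exact hWIcc c' hc' h
    obtain ⟨x, hxc, hsing⟩ := ht_filter_eq_singleton hbound (hFc c hc).2 (hFc c hc).1 hiI
    obtain ⟨x', hxc', hsing'⟩ := ht_filter_eq_singleton hbound (hFc c' hc').2 (hFc c' hc').1 hiI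
    have hxi : ht x = i := by
      have : x ∈ c.filter (fun y => ht y = i) := by rw [hsing]; exact Finset.mem_singleton_self x
      exact (Finset.mem_filter.mp this).2
    have hxi' : ht x' = i := by
      have : x' ∈ c'.filter (fun y => ht y = i) := by
        rw [hsing']; exact Finset.mem_singleton_self x'
      exact (Finset.mem_filter.mp this).2
    have keyeq : fC c i = fC c' i := by
      rcases Finset.mem_union.mp hiW with h | h
      · have hxA : x ∈ A c := Finset.mem_filter.mpr ⟨hxc, hxi ▸ h⟩
        have hxS : x ∈ S := hAS hxA
        have hxc'mem : x ∈ c' := hSc' hxS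
        have : x ∈ c'.filter (fun y => ht y = i) := Finset.mem_filter.mpr ⟨hxc'mem, hxi⟩
        rw [hsing', Finset.mem_singleton] at this
        rw [hfC]
        simp only
        rw [hsing, hsing', this]
      · have hxA : x' ∈ A c' := Finset.mem_filter.mpr ⟨hxc', hxi' ▸ h⟩
        have hxS : x' ∈ S := hAS' hxA
        have hxcmem : x' ∈ c := hSc hxS
        have : x' ∈ c.filter (fun y => ht y = i) := Finset.mem_filter.mpr ⟨hxcmem, hxi'⟩
        rw [hsing, Finset.mem_singleton] at this
        rw [hfC]
        simp only
        rw [hsing, hsing', ← this]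
    exact hine keyeq
  -- union of all subchain collections
  set U : Finset (Finset P) := F.biUnion N with hU
  have hUcard : M * ((n - s₀).choose (ℓ - 1)) ≤ U.card := by
    rw [hU, Finset.card_biUnion hdisjN]
    calc M * ((n - s₀).choose (ℓ - 1)) = F.card • ((n - s₀).choose (ℓ - 1)) := by
          rw [hFcard, smul_eq_mul]
      _ ≤ ∑ c ∈ F, (N c).card := Finset.card_nsmul_le_sum F _ _ hNlb
  set K1 : Finset (Finset P) :=
    Finset.univ.filter (fun S => S.card = k + 1 ∧ IsChain (· ≤ ·) (↑S : Set P)) with hK1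
  have hUK : U ⊆ K1 := by
    intro S hS
    obtain ⟨c, hc, hSN⟩ := Finset.mem_biUnion.mp hS
    simp only [hN, Finset.mem_filter, Finset.mem_powerset] at hSN
    obtain ⟨hSc, _, hScard⟩ := hSN
    simp only [hK1, Finset.mem_filter, Finset.mem_univ, true_and]
    exact ⟨hScard, IsChain.mono (by exact_mod_cast hSc) (hFc c hc).2⟩
  have hnat : M * ((n - s₀).choose (ℓ - 1)) ≤ K1.card :=
    le_trans hUcard (Finset.card_le_card hUK)
  -- identify ncard with K1.card
  have hK1set : {c : Finset P | c.card = k + 1 ∧ IsChain (· ≤ ·) (↑c : Set P)} = ↑K1 := by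
    ext c; simp [hK1]
  rw [hK1set, Set.ncard_coe_finset]
  -- real analysis part
  set c₀ : ℝ := ((ℓ : ℝ) - 1) / ((k : ℝ) + 2 - s₀) with hc₀def
  have hden : (0 : ℝ) < (k : ℝ) + 2 - s₀ := by linarith
  have hc₀0 : 0 ≤ c₀ := by
    apply div_nonneg _ hden.le
    have : (1 : ℝ) ≤ (ℓ : ℝ) := by exact_mod_cast hℓ
    linarith
  have hratio : ((n.choose (ℓ - 1) : ℕ) : ℝ)
      ≤ Real.exp (s₀ * c₀) * (((n - s₀).choose (ℓ - 1) : ℕ) : ℝ) := by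
    have hrm : ℓ - 1 ≤ n - s₀ := by omega
    have hc₀le : ((ℓ - 1 : ℕ) : ℝ) / (((n - s₀ : ℕ) : ℝ) + 1 - ((ℓ - 1 : ℕ) : ℝ)) ≤ c₀ := by
      apply le_of_eq
      rw [Nat.cast_sub hs0n, Nat.cast_sub hℓ, hc₀def, hn]
      push_cast
      ring_nf
    have := choose_ratio (n - s₀) (ℓ - 1) hrm c₀ hc₀0 hc₀le s₀
    rwa [Nat.sub_add_cancel hs0n] at this
  have hsymm2 : n.choose (k + 1) = n.choose (ℓ - 1) := by
    have e : ℓ - 1 = n - (k + 1) := by omega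
    rw [e]
    exact (Nat.choose_symm (by omega)).symm
  -- the exponent comparison
  set ε : ℝ := (2 * ((ℓ : ℝ) - 1) * (L + 1)) / (k : ℝ) with hε
  have hkey : (s₀ : ℝ) * (k : ℝ) ≤ 2 * (L + 1) * ((k : ℝ) + 2 - s₀) := by
    have h1 : (0 : ℝ) ≤ (s₀ : ℝ) := Nat.cast_nonneg _
    nlinarith [mul_nonneg (sub_nonneg.mpr hsL) hden.le,
      mul_nonneg h1 (sub_nonneg.mpr hs4)]
  have hεc : (s₀ : ℝ) * c₀ ≤ ε := by
    rw [hε, hc₀def]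
    rw [mul_div_assoc'] at *
    rw [div_le_div_iff₀ hden (by positivity)]
    have hl1 : (0 : ℝ) ≤ (ℓ : ℝ) - 1 := by
      have : (1 : ℝ) ≤ (ℓ : ℝ) := by exact_mod_cast hℓ
      linarith
    calc (s₀ : ℝ) * ((ℓ : ℝ) - 1) * (k : ℝ) = ((ℓ : ℝ) - 1) * ((s₀ : ℝ) * (k : ℝ)) := by ring
      _ ≤ ((ℓ : ℝ) - 1) * (2 * (L + 1) * ((k : ℝ) + 2 - s₀)) :=
          mul_le_mul_of_nonneg_left hkey hl1
      _ = 2 * ((ℓ : ℝ) - 1) * (L + 1) * ((k : ℝ) + 2 - s₀) := by ring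
  -- final chain of inequalities
  have hexp_le : Real.exp (-(2 * ((ℓ : ℝ) - 1) * (L + 1)) / k) * Real.exp (s₀ * c₀) ≤ 1 := by
    rw [← Real.exp_add, Real.exp_le_one_iff]
    have : -(2 * ((ℓ : ℝ) - 1) * (L + 1)) / k = -ε := by rw [hε]; ring
    rw [this]
    linarith
  have hMnn : (0 : ℝ) ≤ (M : ℝ) := Nat.cast_nonneg _
  calc Real.exp (-(2 * ((ℓ : ℝ) - 1) * (L + 1)) / k) * M * (n.choose (k + 1) : ℕ)
      = Real.exp (-(2 * ((ℓ : ℝ) - 1) * (L + 1)) / k) * M * ((n.choose (ℓ - 1) : ℕ) : ℝ) := by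
        rw [hsymm2]
    _ ≤ Real.exp (-(2 * ((ℓ : ℝ) - 1) * (L + 1)) / k) * M
        * (Real.exp (s₀ * c₀) * (((n - s₀).choose (ℓ - 1) : ℕ) : ℝ)) := by
        apply mul_le_mul_of_nonneg_left hratio
        positivity
    _ = (Real.exp (-(2 * ((ℓ : ℝ) - 1) * (L + 1)) / k) * Real.exp (s₀ * c₀))
        * (M * (((n - s₀).choose (ℓ - 1) : ℕ) : ℝ)) := by ring
    _ ≤ 1 * (M * (((n - s₀).choose (ℓ - 1) : ℕ) : ℝ)) := by
        apply mul_le_mul_of_nonneg_right hexp_le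
        positivity
    _ = ((M * ((n - s₀).choose (ℓ - 1)) : ℕ) : ℝ) := by push_cast; ring
    _ ≤ (K1.card : ℝ) := by exact_mod_cast hnat
end

section
/- Let P be a finite poset of height h with canonical antichain decomposition A_1, ..., A_h. For x ∈ A_i let u_i(x) be the number of chains L of length h − i + 1 in P with minimum element x, and let Σ_i = Σ_{x ∈ A_i} u_i(x). Then Σ_i ≥ Σ_{i+1} for every i ∈ [h−1]. -/
/-- `x` is in the `i`-th canonical level of the poset: the longest chain whose maximum
element is `x` has exactly `i` elements. -/
def levelAt {P : Type*} [PartialOrder P] (i : ℕ) (x : P) : Prop :=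
  (∃ c : Finset P, IsChain (· ≤ ·) (↑c : Set P) ∧ x ∈ c ∧ (∀ y ∈ c, y ≤ x) ∧ c.card = i) ∧
  ∀ c : Finset P, IsChain (· ≤ ·) (↑c : Set P) → x ∈ c → (∀ y ∈ c, y ≤ x) → c.card ≤ i

/-- `u_i(x)`: the number of chains with `h - i + 1` elements whose minimum element is `x`
(`h` being the height of the poset). -/
noncomputable def uCount {P : Type*} [PartialOrder P] (h i : ℕ) (x : P) : ℕ :=
  Set.ncard {c : Finset P | IsChain (· ≤ ·) (↑c : Set P) ∧ x ∈ c ∧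
    (∀ y ∈ c, x ≤ y) ∧ c.card = h - i + 1}

lemma chain_max_exists {P : Type*} [PartialOrder P] (c : Finset P)
    (hc : IsChain (· ≤ ·) (↑c : Set P)) (hne : c.Nonempty) :
    ∃ x ∈ c, ∀ z ∈ c, z ≤ x := by
  obtain ⟨x, hx, hmax⟩ := Finset.exists_maximal hne
  refine ⟨x, hx, fun z hz => ?_⟩
  rcases eq_or_ne z x with rfl | hne'
  · exact le_refl _
  · rcases hc (by exact_mod_cast hz) (by exact_mod_cast hx) hne' with h | h
    · exact h
    · exact hmax hz h

lemma exists_below {P : Type*} [PartialOrder P] (i : ℕ) (hi : 1 ≤ i) (y : P)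
    (hy : levelAt (i + 1) y) : ∃ x, levelAt i x ∧ x < y := by
  classical
  obtain ⟨⟨c, hc, hyc, hcy, hcard⟩, hmax⟩ := hy
  set d := c.erase y with hd
  have hdcard : d.card = i := by
    rw [hd, Finset.card_erase_of_mem hyc, hcard]; omega
  have hdsub : (↑d : Set P) ⊆ ↑c := by
    rw [hd]; exact_mod_cast Finset.erase_subset _ _
  have hdchain : IsChain (· ≤ ·) (↑d : Set P) := hc.mono hdsub
  have hdne : d.Nonempty := Finset.card_pos.mp (by omega)
  obtain ⟨x, hxd, hxmax⟩ := chain_max_exists d hdchain hdne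
  have hxc : x ∈ c := Finset.mem_of_mem_erase hxd
  have hxy : x < y := lt_of_le_of_ne (hcy x hxc) (Finset.ne_of_mem_erase hxd)
  refine ⟨x, ⟨⟨d, hdchain, hxd, hxmax, hdcard⟩, ?_⟩, hxy⟩
  intro e he hxe hex
  have hyne : y ∉ e := fun hy' => absurd (lt_of_le_of_lt (hex y hy') hxy) (lt_irrefl y)
  have hchain' : IsChain (· ≤ ·) (↑(insert y e) : Set P) := by
    rw [Finset.coe_insert]
    exact he.insert (fun b hb _ => Or.inr (le_of_lt (lt_of_le_of_lt (hex b (by exact_mod_cast hb)) hxy)))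
  have := hmax (insert y e) hchain' (Finset.mem_insert_self _ _)
    (fun z hz => by
      rcases Finset.mem_insert.mp hz with rfl | hz
      · exact le_refl _
      · exact le_of_lt (lt_of_le_of_lt (hex z hz) hxy))
  rw [Finset.card_insert_of_notMem hyne] at this
  omega

/-- `Σ_i ≥ Σ_{i+1}` for the canonical antichain decomposition:
`Σ_i = Σ_{x ∈ A_i} u_i(x)` is non-increasing in `i` for `1 ≤ i ≤ h − 1`. -/
theorem stmt_9 {P : Type*} [Fintype P] [PartialOrder P] (h : ℕ)
    (hh : (∃ c : Finset P, c.card = h ∧ IsChain (· ≤ ·) (↑c : Set P)) ∧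
      ∀ c : Finset P, IsChain (· ≤ ·) (↑c : Set P) → c.card ≤ h)
    (A : ℕ → Finset P) (hA : ∀ i x, x ∈ A i ↔ levelAt i x)
    (i : ℕ) (hi : 1 ≤ i) (hih : i ≤ h - 1) :
    ∑ x ∈ A (i + 1), uCount h (i + 1) x ≤ ∑ x ∈ A i, uCount h i x := by
  classical
  have hih' : i + 1 ≤ h := by omega
  -- convert uCount to a Finset card
  set T : ℕ → P → Finset (Finset P) := fun j x =>
    Finset.univ.filter (fun c : Finset P => IsChain (· ≤ ·) (↑c : Set P) ∧ x ∈ c ∧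
      (∀ y ∈ c, x ≤ y) ∧ c.card = h - j + 1) with hT
  have hcount : ∀ (j : ℕ) (x : P), uCount h j x = (T j x).card := by
    intro j x
    rw [uCount, ← Set.ncard_coe_finset]
    congr 1
    ext c
    simp [hT]
  have h1 : ∑ x ∈ A (i + 1), uCount h (i + 1) x = ((A (i + 1)).sigma (T (i + 1))).card := by
    rw [Finset.card_sigma]
    exact Finset.sum_congr rfl (fun x _ => hcount _ x)
  have h2 : ∑ x ∈ A i, uCount h i x = ((A i).sigma (T i)).card := by
    rw [Finset.card_sigma]
    exact Finset.sum_congr rfl (fun x _ => hcount _ x)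
  rw [h1, h2]
  -- choice of an element below each y of level i+1
  have key : ∀ y : P, ∃ x : P, y ∈ A (i + 1) → levelAt i x ∧ x < y := by
    intro y
    by_cases hy : y ∈ A (i + 1)
    · obtain ⟨x, hx⟩ := exists_below i hi y ((hA _ y).mp hy)
      exact ⟨x, fun _ => hx⟩
    · exact ⟨y, fun h' => absurd h' hy⟩
  choose f hf using key
  apply Finset.card_le_card_of_injOn (fun p => ⟨f p.1, insert (f p.1) p.2⟩)
  · rintro ⟨y, c⟩ hp
    rw [Finset.mem_coe, Finset.mem_sigma] at hp ⊢
    obtain ⟨hyA, hc⟩ := hp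
    rw [hT, Finset.mem_filter] at hc
    obtain ⟨-, hchain, hyc, hcy, hcard⟩ := hc
    obtain ⟨hlev, hlt⟩ := hf y hyA
    have hxlt : ∀ z ∈ c, f y < z := fun z hz => lt_of_lt_of_le hlt (hcy z hz)
    have hxnot : f y ∉ c := fun hmem => absurd (hxlt _ hmem) (lt_irrefl _)
    constructor
    · exact (hA i (f y)).mpr hlev
    · rw [hT, Finset.mem_filter]
      refine ⟨Finset.mem_univ _, ?_, Finset.mem_insert_self _ _, ?_, ?_⟩
      · rw [Finset.coe_insert]
        exact hchain.insert (fun b hb _ => Or.inl (le_of_lt (hxlt b (by exact_mod_cast hb))))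
      · intro z hz
        rcases Finset.mem_insert.mp hz with rfl | hz
        · exact le_refl _
        · exact le_of_lt (hxlt z hz)
      · rw [Finset.card_insert_of_notMem hxnot, hcard]
        omega
  · rintro ⟨y, c⟩ hp ⟨y', c'⟩ hq heq
    simp only [Finset.coe_sigma, Set.mem_sigma_iff, Finset.mem_coe] at hp hq
    obtain ⟨hyA, hc⟩ := hp
    obtain ⟨hyA', hc'⟩ := hq
    rw [hT, Finset.mem_filter] at hc hc'
    obtain ⟨-, hchain, hyc, hcy, hcard⟩ := hc
    obtain ⟨-, hchain', hyc', hcy', hcard'⟩ := hc'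
    obtain ⟨hlev, hlt⟩ := hf y hyA
    obtain ⟨hlev', hlt'⟩ := hf y' hyA'
    have hfeq : f y = f y' := congrArg Sigma.fst heq
    have hseq : insert (f y) c = insert (f y') c' := by
      have := congrArg Sigma.snd heq
      simpa using this
    have hxnot : f y ∉ c := fun hmem =>
      absurd (lt_of_lt_of_le hlt (hcy _ hmem)) (lt_irrefl _)
    have hxnot' : f y' ∉ c' := fun hmem =>
      absurd (lt_of_lt_of_le hlt' (hcy' _ hmem)) (lt_irrefl _)
    have hceq : c = c' := by
      rw [← Finset.erase_insert hxnot, hseq, hfeq, Finset.erase_insert hxnot']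
    have hyy : y = y' := by
      subst hceq
      exact le_antisymm (hcy y' hyc') (hcy' y hyc)
    subst hyy
    subst hceq
    rfl
end

section
/- Let P be a finite poset whose canonical antichain decomposition is A_1, ..., A_{k+ℓ} (so the height of P is k+ℓ), let w(P) ≤ k+ℓ, let n = |P| = q(k+ℓ+1) + (k−q)(k+ℓ) with 0 < q ≤ k, and let F = {i ∈ [k+ℓ] : |A_i| ≥ k+1}. Then for every subset I ⊆ [k+ℓ], |F| ≥ (q + Σ_{i∈I}(k − |A_i|)) / ℓ. -/
/-- If a poset of height `k+ℓ` and width at most `k+ℓ` has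
`n = q(k+ℓ+1) + (k−q)(k+ℓ)` elements with `0 < q ≤ k`, then for
`F = {i ∈ [k+ℓ] : |A_i| ≥ k+1}` and any `I ⊆ [k+ℓ]` one has
`|F| ≥ (q + Σ_{i∈I}(k − |A_i|))/ℓ`. -/
theorem stmt_11 {P : Type*} [Fintype P] [PartialOrder P] (k ℓ q : ℕ)
    (hk : 0 < k) (hℓ : 0 < ℓ) (hq : 0 < q) (hqk : q ≤ k)
    (hh : (∃ c : Finset P, c.card = k + ℓ ∧ IsChain (· ≤ ·) (↑c : Set P)) ∧
      ∀ c : Finset P, IsChain (· ≤ ·) (↑c : Set P) → c.card ≤ k + ℓ)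
    (hw : ∀ s : Finset P, IsAntichain (· ≤ ·) (↑s : Set P) → s.card ≤ k + ℓ)
    (A : ℕ → Finset P) (hA : ∀ i x, x ∈ A i ↔ levelAt i x)
    (hn : Fintype.card P = q * (k + ℓ + 1) + (k - q) * (k + ℓ)) :
    ∀ I ⊆ Finset.Icc 1 (k + ℓ),
      ((q : ℝ) + ∑ i ∈ I, ((k : ℝ) - ((A i).card : ℝ))) / (ℓ : ℝ) ≤
        ((((Finset.Icc 1 (k + ℓ)).filter fun i => k + 1 ≤ (A i).card).card : ℕ) : ℝ) := by
  classical
  intro I hI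
  -- Each level is an antichain
  have hanti : ∀ i, IsAntichain (· ≤ ·) (↑(A i) : Set P) := by
    intro i x hx y hy hxy hle
    rw [Finset.mem_coe, hA] at hx hy
    obtain ⟨⟨c, hc, hxc, hcx, hcard⟩, _⟩ := hx
    obtain ⟨_, hmax⟩ := hy
    have hyc : y ∉ c := fun h => hxy (le_antisymm hle (hcx y h))
    have hchain : IsChain (· ≤ ·) (↑(insert y c) : Set P) := by
      rw [Finset.coe_insert]
      exact hc.insert (fun b hb _ => Or.inr ((hcx b hb).trans hle))
    have := hmax (insert y c) hchain (Finset.mem_insert_self y c)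
      (fun z hz => by
        rcases Finset.mem_insert.1 hz with rfl | hz
        · exact le_rfl
        · exact (hcx z hz).trans hle)
    rw [Finset.card_insert_of_notMem hyc, hcard] at this
    omega
  have hAle : ∀ i, (A i).card ≤ k + ℓ := fun i => hw (A i) (hanti i)
  -- The level function
  set h : P → ℕ := fun x => Nat.findGreatest
    (fun i => ∃ c : Finset P, IsChain (· ≤ ·) (↑c : Set P) ∧ x ∈ c ∧ (∀ y ∈ c, y ≤ x) ∧
      c.card = i) (k + ℓ) with hh_def
  have hone : ∀ x : P, ∃ c : Finset P, IsChain (· ≤ ·) (↑c : Set P) ∧ x ∈ c ∧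
      (∀ y ∈ c, y ≤ x) ∧ c.card = 1 := by
    intro x
    refine ⟨{x}, ?_, Finset.mem_singleton_self x, ?_, Finset.card_singleton x⟩
    · intro a ha b hb hab
      simp only [Finset.coe_singleton, Set.mem_singleton_iff] at ha hb
      exact absurd (ha.trans hb.symm) hab
    · intro y hy; rw [Finset.mem_singleton] at hy; exact hy.le
  have hlevel : ∀ x : P, levelAt (h x) x ∧ 1 ≤ h x ∧ h x ≤ k + ℓ := by
    intro x
    have h1 : 1 ≤ h x := Nat.le_findGreatest (by omega) (hone x)
    have hspec := Nat.findGreatest_spec (P := fun i => ∃ c : Finset P,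
      IsChain (· ≤ ·) (↑c : Set P) ∧ x ∈ c ∧ (∀ y ∈ c, y ≤ x) ∧ c.card = i)
      (m := 1) (n := k + ℓ) (by omega) (hone x)
    refine ⟨⟨hspec, ?_⟩, h1, Nat.findGreatest_le _⟩
    intro c hc hxc hcx
    exact Nat.le_findGreatest (hh.2 c hc) ⟨c, hc, hxc, hcx, rfl⟩
  have huniq : ∀ i (x : P), levelAt i x → h x = i := by
    intro i x hx
    obtain ⟨⟨c, hc, hxc, hcx, hcard⟩, hmax⟩ := hx
    obtain ⟨⟨⟨c', hc', hxc', hcx', hcard'⟩, hmax'⟩, _, _⟩ := hlevel x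
    have e1 := hmax c' hc' hxc' hcx'
    have e2 := hmax' c hc hxc hcx
    omega
  have hAfib : ∀ i, A i = Finset.univ.filter (fun x => h x = i) := by
    intro i
    ext x
    simp only [Finset.mem_filter, Finset.mem_univ, true_and, hA]
    constructor
    · exact huniq i x
    · rintro rfl; exact (hlevel x).1
  have hsumA : ∑ i ∈ Finset.Icc 1 (k + ℓ), (A i).card = Fintype.card P := by
    rw [← Finset.card_univ,
      Finset.card_eq_sum_card_fiberwise (f := h) (t := Finset.Icc 1 (k + ℓ))
        (fun x _ => by have := (hlevel x).2; rw [Finset.mem_coe, Finset.mem_Icc]; omega)]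
    exact Finset.sum_congr rfl fun i _ => by rw [hAfib i]
  have hcardP : Fintype.card P = k * (k + ℓ) + q := by
    rw [hn]
    obtain ⟨m, rfl⟩ : ∃ m, k = q + m := ⟨k - q, by omega⟩
    rw [Nat.add_sub_cancel_left]; ring
  -- arithmetic
  set J := Finset.Icc 1 (k + ℓ) \ I with hJ
  have hIcard : I.card ≤ k + ℓ := by
    have := Finset.card_le_card hI
    simpa [Nat.card_Icc] using this
  have hJcardN : J.card = (k + ℓ) - I.card := by
    rw [hJ, Finset.card_sdiff_of_subset hI, Nat.card_Icc]; omega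
  have hJcard : (J.card : ℝ) = (k + ℓ : ℝ) - I.card := by
    rw [hJcardN, Nat.cast_sub hIcard]; push_cast; ring
  have hsumR : ∑ i ∈ Finset.Icc 1 (k + ℓ), ((A i).card : ℝ) = k * (k + ℓ) + q := by
    rw [← Nat.cast_sum, hsumA, hcardP]; push_cast; ring
  have hsplit : ∑ i ∈ Finset.Icc 1 (k + ℓ), ((A i).card : ℝ)
      = ∑ i ∈ I, ((A i).card : ℝ) + ∑ i ∈ J, ((A i).card : ℝ) := by
    rw [hJ, Finset.sum_sdiff_eq_sub hI]; ring
  have key : (q : ℝ) + ∑ i ∈ I, ((k : ℝ) - ((A i).card : ℝ))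
      = ∑ i ∈ J, (((A i).card : ℝ) - k) := by
    rw [Finset.sum_sub_distrib, Finset.sum_sub_distrib, Finset.sum_const, Finset.sum_const]
    simp only [nsmul_eq_mul]
    rw [hJcard]
    have := hsplit
    rw [hsumR] at this
    linarith
  have hbound : ∑ i ∈ J, (((A i).card : ℝ) - k)
      ≤ ((((Finset.Icc 1 (k + ℓ)).filter fun i => k + 1 ≤ (A i).card).card : ℕ) : ℝ) * ℓ := by
    calc ∑ i ∈ J, (((A i).card : ℝ) - k)
        ≤ ∑ i ∈ J, (if k + 1 ≤ (A i).card then (ℓ : ℝ) else 0) := by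
          apply Finset.sum_le_sum
          intro i _
          by_cases hc : k + 1 ≤ (A i).card
          · rw [if_pos hc]
            have := hAle i
            have : ((A i).card : ℝ) ≤ (k : ℝ) + ℓ := by exact_mod_cast this
            linarith
          · rw [if_neg hc]
            push_neg at hc
            have : ((A i).card : ℝ) ≤ (k : ℝ) := by exact_mod_cast Nat.lt_succ_iff.mp hc
            linarith
      _ = ((J.filter fun i => k + 1 ≤ (A i).card).card : ℝ) * ℓ := by
          rw [← Finset.sum_filter, Finset.sum_const, nsmul_eq_mul]
      _ ≤ ((((Finset.Icc 1 (k + ℓ)).filter fun i => k + 1 ≤ (A i).card).card : ℕ) : ℝ) * ℓ := by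
          have hsub : (J.filter fun i => k + 1 ≤ (A i).card)
              ⊆ ((Finset.Icc 1 (k + ℓ)).filter fun i => k + 1 ≤ (A i).card) :=
            Finset.filter_subset_filter _ (by rw [hJ]; exact Finset.sdiff_subset)
          have := Finset.card_le_card hsub
          have hℓ' : (0 : ℝ) ≤ ℓ := by positivity
          exact mul_le_mul_of_nonneg_right (by exact_mod_cast this) hℓ'
  rw [div_le_iff₀ (by positivity : (0 : ℝ) < ℓ)]
  linarith [key, hbound]
end

section
/- Let P be a finite poset of height h with canonical antichain decomposition A_1, ..., A_h and bipartite Hasse graphs G_i on A_i ∪ A_{i+1}. Fix i ∈ [h−1] with |A_i| ≥ k+1, and let B_{i+1} ⊆ A_{i+1} be the set of elements y with u_{i+1}(y) ≥ 1 having exactly one G_i-neighbor in A_i. Then A_i ∪ B_{i+1} contains at least 2^{min{k, |B_{i+1}|}} antichains with k+1 elements. -/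
lemma levelAt_succ_le {P : Type*} [PartialOrder P] [DecidableEq P] {i j : ℕ} {x y : P}
    (hx : levelAt i x) (hy : levelAt j y) (hxy : x ≤ y) (hne : x ≠ y) : i + 1 ≤ j := by
  obtain ⟨⟨c, hc, hxc, hcx, hcard⟩, _⟩ := hx
  obtain ⟨_, hmax⟩ := hy
  have hyc : y ∉ c := fun hyc => hne (le_antisymm hxy (hcx y hyc))
  have hchain : IsChain (· ≤ ·) (↑(insert y c) : Set P) := by
    intro a ha b hb hab
    simp only [Finset.coe_insert, Set.mem_insert_iff, Finset.mem_coe] at ha hb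
    rcases ha with rfl | ha
    · rcases hb with rfl | hb
      · exact absurd rfl hab
      · exact Or.inr (le_trans (hcx b hb) hxy)
    · rcases hb with rfl | hb
      · exact Or.inl (le_trans (hcx a ha) hxy)
      · exact hc ha hb hab
  have := hmax (insert y c) hchain (Finset.mem_insert_self _ _) (by
    intro z hz
    rcases Finset.mem_insert.mp hz with rfl | hz
    · exact le_refl _
    · exact le_trans (hcx z hz) hxy)
  rwa [Finset.card_insert_of_notMem hyc, hcard] at this

lemma levelAt_unique {P : Type*} [PartialOrder P] {i j : ℕ} {x : P}
    (hx : levelAt i x) (hy : levelAt j x) : i = j := by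
  obtain ⟨⟨c, hc, hxc, hcx, hcard⟩, hmaxi⟩ := hx
  obtain ⟨⟨d, hd, hxd, hdx, hdcard⟩, hmaxj⟩ := hy
  have h1 := hmaxj c hc hxc hcx
  have h2 := hmaxi d hd hxd hdx
  omega

/-- If `|A_i| ≥ k+1` and `B_{i+1}` is the set of elements of `A_{i+1}` lying on a maximum
chain that have exactly one neighbor in `A_i`, then `A_i ∪ B_{i+1}` contains at least
`2^min{k,|B_{i+1}|}` antichains with `k+1` elements. -/
theorem stmt_12 {P : Type*} [Fintype P] [DecidableEq P] [PartialOrder P] (h k i : ℕ)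
    (hh : (∃ c : Finset P, c.card = h ∧ IsChain (· ≤ ·) (↑c : Set P)) ∧
      ∀ c : Finset P, IsChain (· ≤ ·) (↑c : Set P) → c.card ≤ h)
    (A : ℕ → Finset P) (hA : ∀ j x, x ∈ A j ↔ levelAt j x)
    (hi : 1 ≤ i) (hih : i ≤ h - 1) (hAi : k + 1 ≤ (A i).card)
    (B : Finset P)
    (hB : ∀ y, y ∈ B ↔ y ∈ A (i + 1) ∧ 1 ≤ uCount h (i + 1) y ∧
      ∃! x, x ∈ A i ∧ x ≤ y) :
    2 ^ min k B.card ≤ Set.ncard {s : Finset P | s.card = k + 1 ∧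
      IsAntichain (· ≤ ·) (↑s : Set P) ∧ s ⊆ A i ∪ B} := by
  classical
  -- the unique neighbor function
  have hex : ∀ y : P, ∃ x : P, y ∈ B → (x ∈ A i ∧ x ≤ y) ∧ ∀ z, z ∈ A i → z ≤ y → z = x := by
    intro y
    by_cases hy : y ∈ B
    · obtain ⟨x, hx, hux⟩ := ((hB y).mp hy).2.2
      exact ⟨x, fun _ => ⟨hx, fun z hz1 hz2 => hux z ⟨hz1, hz2⟩⟩⟩
    · exact ⟨y, fun hy' => absurd hy' hy⟩
  choose nbr hnbr using hex
  -- elements of B are at level i+1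
  have hBlevel : ∀ y ∈ B, levelAt (i + 1) y := fun y hy =>
    (hA (i + 1) y).mp ((hB y).mp hy).1
  have hAlevel : ∀ x ∈ A i, levelAt i x := fun x hx => (hA i x).mp hx
  -- A i is disjoint from B
  have hdisjAB : ∀ x ∈ A i, x ∉ B := by
    intro x hx hxB
    have := levelAt_unique (hAlevel x hx) (hBlevel x hxB)
    omega
  -- choose B₀ ⊆ B of size min k B.card
  obtain ⟨B₀, hB₀sub, hB₀card⟩ := Finset.exists_subset_card_eq (s := B) (n := min k B.card)
    (min_le_right _ _)
  -- choose complements T Y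
  have hexT : ∀ Y : Finset P, ∃ T : Finset P,
      T ⊆ A i \ Y.image nbr ∧ (Y ⊆ B₀ → T.card = k + 1 - Y.card) := by
    intro Y
    by_cases hY : Y ⊆ B₀
    · have h1 : (Y.image nbr).card ≤ Y.card := Finset.card_image_le
      have h2 : (A i).card - (Y.image nbr).card ≤ (A i \ Y.image nbr).card :=
        Finset.le_card_sdiff _ _
      have hYk : Y.card ≤ k := by
        have h3 : Y.card ≤ B₀.card := Finset.card_le_card hY
        omega
      have hcard : k + 1 - Y.card ≤ (A i \ Y.image nbr).card := by omega
      obtain ⟨T, hT, hTc⟩ := Finset.exists_subset_card_eq hcard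
      exact ⟨T, hT, fun _ => hTc⟩
    · exact ⟨∅, by simp, fun hY' => absurd hY' hY⟩
  choose T hT1 hT2 using hexT
  set f : Finset P → Finset P := fun Y => Y ∪ T Y with hf
  -- basic facts for Y ⊆ B₀
  have hYB : ∀ Y : Finset P, Y ⊆ B₀ → Y ⊆ B := fun Y hY => hY.trans hB₀sub
  have hYk : ∀ Y : Finset P, Y ⊆ B₀ → Y.card ≤ k := by
    intro Y hY
    have h3 : Y.card ≤ B₀.card := Finset.card_le_card hY
    omega
  have hTAi : ∀ Y : Finset P, T Y ⊆ A i := fun Y =>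
    (hT1 Y).trans (Finset.sdiff_subset)
  have hdisjYT : ∀ Y : Finset P, Y ⊆ B₀ → Disjoint Y (T Y) := by
    intro Y hY
    rw [Finset.disjoint_left]
    intro a haY haT
    exact hdisjAB a (hTAi Y haT) (hYB Y hY haY)
  -- membership of f Y in the target set
  have hmem : ∀ Y : Finset P, Y ⊆ B₀ → (f Y).card = k + 1 ∧
      IsAntichain (· ≤ ·) (↑(f Y) : Set P) ∧ f Y ⊆ A i ∪ B := by
    intro Y hY
    refine ⟨?_, ?_, ?_⟩
    · rw [hf]
      rw [Finset.card_union_of_disjoint (hdisjYT Y hY), hT2 Y hY]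
      have := hYk Y hY
      omega
    · intro a ha b hb hne hab
      simp only [hf, Finset.coe_union, Set.mem_union, Finset.mem_coe] at ha hb
      rcases ha with ha | ha
      · rcases hb with hb | hb
        · -- both in Y ⊆ B, same level i+1
          have := levelAt_succ_le (hBlevel a (hYB Y hY ha)) (hBlevel b (hYB Y hY hb)) hab hne
          omega
        · -- a ∈ B at level i+1, b ∈ A i at level i, a ≤ b impossible
          have := levelAt_succ_le (hBlevel a (hYB Y hY ha)) (hAlevel b (hTAi Y hb)) hab hne
          omega
      · rcases hb with hb | hb
        · -- a ∈ T Y ⊆ A i, b ∈ Y ⊆ B, a ≤ b: then a = nbr b, but T avoids image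
          have hbB : b ∈ B := hYB Y hY hb
          have haAi : a ∈ A i := hTAi Y ha
          have : a = nbr b := (hnbr b hbB).2 a haAi hab
          have himg : a ∈ Y.image nbr := Finset.mem_image.mpr ⟨b, hb, this.symm⟩
          have := (Finset.mem_sdiff.mp (hT1 Y ha)).2
          exact this himg
        · -- both in A i
          have := levelAt_succ_le (hAlevel a (hTAi Y ha)) (hAlevel b (hTAi Y hb)) hab hne
          omega
    · intro a ha
      rcases Finset.mem_union.mp ha with ha | ha
      · exact Finset.mem_union_right _ (hYB Y hY ha)
      · exact Finset.mem_union_left _ (hTAi Y ha)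
  -- injectivity of f on subsets of B₀
  have hinj : ∀ Y₁ ∈ B₀.powerset, ∀ Y₂ ∈ B₀.powerset, f Y₁ = f Y₂ → Y₁ = Y₂ := by
    intro Y₁ hY₁ Y₂ hY₂ hfe
    rw [Finset.mem_powerset] at hY₁ hY₂
    have key : ∀ Y : Finset P, Y ⊆ B₀ → f Y ∩ B = Y := by
      intro Y hY
      ext a
      simp only [hf, Finset.mem_inter, Finset.mem_union]
      constructor
      · rintro ⟨ha | ha, haB⟩
        · exact ha
        · exact absurd haB (hdisjAB a (hTAi Y ha))
      · intro ha
        exact ⟨Or.inl ha, hYB Y hY ha⟩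
    rw [← key Y₁ hY₁, ← key Y₂ hY₂, hfe]
  -- counting
  have hsub : ↑(B₀.powerset.image f) ⊆ {s : Finset P | s.card = k + 1 ∧
      IsAntichain (· ≤ ·) (↑s : Set P) ∧ s ⊆ A i ∪ B} := by
    intro s hs
    simp only [Finset.coe_image, Set.mem_image, Finset.mem_coe,
      Finset.mem_powerset] at hs
    obtain ⟨Y, hY, rfl⟩ := hs
    exact hmem Y hY
  calc 2 ^ min k B.card = (B₀.powerset.image f).card := by
        rw [Finset.card_image_of_injOn (fun a ha b hb => hinj a ha b hb),
          Finset.card_powerset, hB₀card]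
    _ = (↑(B₀.powerset.image f) : Set (Finset P)).ncard := (Set.ncard_coe_finset _).symm
    _ ≤ _ := Set.ncard_le_ncard hsub (Set.toFinite _)
end

section
/- For all positive integers k and n with n > k^2, let ℓ = ⌈n/k⌉ − k − 1 and q = n − k(k+ℓ). Then the number of monotone (k+1)-subsequences of the extremal permutation τ_{k,n} satisfies m_k(τ_{k,n}) = k·C(k+ℓ, k+1) + q·C(k+ℓ, k) = (q + kℓ/(k+1))·C(k+ℓ, k), and in particular m_k(τ_{k,n}) − m_k(τ_{k,n−1}) = C(k+ℓ, k). -/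
/-- `m_k(τ_{k,n}) = r·C(⌈n/k⌉, k+1) + (k−r)·C(⌊n/k⌋, k+1)` with `r = n mod k`. -/
def mkTau (k n : ℕ) : ℕ :=
  n % k * Nat.choose ((n + k - 1) / k) (k + 1) + (k - n % k) * Nat.choose (n / k) (k + 1)

private lemma aux2 (k ℓ q X : ℕ)
    (hX : X = k * Nat.choose (k + ℓ) (k + 1) + q * Nat.choose (k + ℓ) k) :
    (X : ℝ) = ((q : ℝ) + (k : ℝ) * (ℓ : ℝ) / ((k : ℝ) + 1)) *
      (Nat.choose (k + ℓ) k : ℝ) := by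
  have h := Nat.choose_succ_right_eq (k + ℓ) k
  rw [Nat.add_sub_cancel_left] at h
  have h' : ((k + ℓ).choose (k + 1) : ℝ) * ((k : ℝ) + 1) = ((k + ℓ).choose k : ℝ) * ℓ := by
    exact_mod_cast h
  have hk1 : (k : ℝ) + 1 ≠ 0 := by positivity
  rw [hX]
  push_cast
  field_simp
  linear_combination (k : ℝ) * h'

/-- With `ℓ = ⌈n/k⌉ − k − 1` and `q = n − k(k+ℓ)`, one has
`m_k(τ_{k,n}) = k·C(k+ℓ, k+1) + q·C(k+ℓ, k) = (q + kℓ/(k+1))·C(k+ℓ, k)` and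
`m_k(τ_{k,n}) − m_k(τ_{k,n−1}) = C(k+ℓ, k)`. -/
theorem stmt_14 (k n ℓ q : ℕ) (hk : 0 < k) (hn : k ^ 2 < n)
    (hℓ : ℓ = (n + k - 1) / k - k - 1) (hq : q = n - k * (k + ℓ)) :
    mkTau k n = k * Nat.choose (k + ℓ) (k + 1) + q * Nat.choose (k + ℓ) k ∧
    (mkTau k n : ℝ) = ((q : ℝ) + (k : ℝ) * (ℓ : ℝ) / ((k : ℝ) + 1)) *
      (Nat.choose (k + ℓ) k : ℝ) ∧
    mkTau k n = mkTau k (n - 1) + Nat.choose (k + ℓ) k := by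
  obtain ⟨m, r, hrk, hnr0⟩ : ∃ m r, r < k ∧ n = k * m + r :=
    ⟨n / k, n % k, Nat.mod_lt _ hk, (Nat.div_add_mod n k).symm⟩
  have hdiv : n / k = m := by rw [hnr0, Nat.mul_add_div hk, Nat.div_eq_of_lt hrk, add_zero]
  have hmod : n % k = r := by rw [hnr0, Nat.mul_add_mod, Nat.mod_eq_of_lt hrk]
  have hkk : k * k < n := by rw [pow_two] at hn; exact hn
  obtain ⟨P, hP⟩ : ∃ P, P = k * m := ⟨_, rfl⟩
  have hnr : n = P + r := by rw [hP]; exact hnr0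
  have hkm : k ≤ m := by
    have h1 : k * k < k * (m + 1) := by rw [Nat.mul_succ]; linarith
    exact Nat.lt_succ_iff.mp (Nat.lt_of_mul_lt_mul_left h1)
  rcases Nat.eq_zero_or_pos r with h0 | hpos
  · -- r = 0
    subst h0
    have hkm' : k < m := by
      have h1 : k * k < k * m := by linarith
      exact Nat.lt_of_mul_lt_mul_left h1
    have hceil : (n + k - 1) / k = m := by
      have e : n + k - 1 = k * m + (k - 1) := by rw [← hP]; omega
      rw [e, Nat.mul_add_div hk, Nat.div_eq_of_lt (by omega), add_zero]
    have hmeq : m = k + ℓ + 1 := by rw [hceil] at hℓ; omega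
    obtain ⟨Q, hQ⟩ : ∃ Q, Q = k * (k + ℓ) := ⟨_, rfl⟩
    have hPQ : P = Q + k := by rw [hP, hQ, hmeq]; ring
    have hq' : q = k := by rw [hq, ← hQ]; omega
    have g1 : mkTau k n = k * Nat.choose (k + ℓ) (k + 1) + q * Nat.choose (k + ℓ) k := by
      simp only [mkTau, hmod, hdiv, hceil, zero_mul, Nat.sub_zero, zero_add]
      have pascal : (k + ℓ + 1).choose (k + 1) = (k + ℓ).choose k + (k + ℓ).choose (k + 1) :=
        Nat.choose_succ_succ _ _
      rw [hmeq, hq', pascal]; ring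
    refine ⟨g1, aux2 _ _ _ _ g1, ?_⟩
    rcases Nat.lt_or_ge k 2 with hk2 | hk2
    · -- k = 1
      have hk1 : k = 1 := by omega
      subst hk1
      have hn1 : n = ℓ + 2 := by omega
      simp only [mkTau, Nat.mod_one, Nat.div_one, zero_mul, Nat.sub_zero, zero_add, one_mul, hn1]
      have pascal : (ℓ + 2).choose 2 = (ℓ + 1).choose 1 + (ℓ + 1).choose 2 :=
        Nat.choose_succ_succ _ _
      have : ℓ + 2 - 1 = ℓ + 1 := by omega
      rw [this, pascal]
      simp [Nat.add_comm]
    · -- k ≥ 2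
      have e1 : n - 1 = k * (k + ℓ) + (k - 1) := by rw [← hQ]; omega
      have hmod1 : (n - 1) % k = k - 1 := by
        rw [e1, Nat.mul_add_mod, Nat.mod_eq_of_lt (by omega)]
      have hdiv1 : (n - 1) / k = k + ℓ := by
        rw [e1, Nat.mul_add_div hk, Nat.div_eq_of_lt (by omega), add_zero]
      have e2 : n - 1 + k - 1 = k * (k + ℓ + 1) + (k - 2) := by
        have h' : k * (k + ℓ + 1) = Q + k := by rw [hQ]; ring
        rw [h']; omega
      have hceil1 : (n - 1 + k - 1) / k = k + ℓ + 1 := by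
        rw [e2, Nat.mul_add_div hk, Nat.div_eq_of_lt (by omega), add_zero]
      simp only [mkTau, hmod, hdiv, hceil, hmod1, hdiv1, hceil1, zero_mul, Nat.sub_zero,
        zero_add]
      have pascal : (k + ℓ + 1).choose (k + 1) = (k + ℓ).choose k + (k + ℓ).choose (k + 1) :=
        Nat.choose_succ_succ _ _
      obtain ⟨u, hu⟩ : ∃ u, k = u + 1 := ⟨k - 1, by omega⟩
      have e3 : k - (k - 1) = 1 := by omega
      have e4 : k - 1 = u := by omega
      rw [hmeq, pascal, e3, e4, hu]; ring
  · -- r > 0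
    have hceil : (n + k - 1) / k = m + 1 := by
      have e : n + k - 1 = k * (m + 1) + (r - 1) := by rw [Nat.mul_succ, ← hP]; omega
      rw [e, Nat.mul_add_div hk, Nat.div_eq_of_lt (by omega), add_zero]
    have hmeq : m = k + ℓ := by rw [hceil] at hℓ; omega
    have hq' : q = r := by rw [hq, ← hmeq, ← hP]; omega
    have pascal : (m + 1).choose (k + 1) = m.choose k + m.choose (k + 1) :=
      Nat.choose_succ_succ _ _
    have g1 : mkTau k n = k * Nat.choose (k + ℓ) (k + 1) + q * Nat.choose (k + ℓ) k := by
      simp only [mkTau, hmod, hdiv, hceil]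
      rw [hq', ← hmeq, pascal]
      obtain ⟨s, hs⟩ : ∃ s, k = r + s := ⟨k - r, by omega⟩
      have e : k - r = s := by omega
      rw [e, hs]; ring
    refine ⟨g1, aux2 _ _ _ _ g1, ?_⟩
    rcases eq_or_lt_of_le (show 1 ≤ r from hpos) with h1 | h2
    · -- r = 1
      have h1' : r = 1 := h1.symm
      subst h1'
      have e1 : n - 1 = k * m + 0 := by rw [← hP]; omega
      have hmod1 : (n - 1) % k = 0 := by rw [e1, Nat.mul_add_mod]; simp
      have hdiv1 : (n - 1) / k = m := by
        rw [e1, Nat.mul_add_div hk]; simp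
      have e2 : n - 1 + k - 1 = k * m + (k - 1) := by rw [← hP]; omega
      have hceil1 : (n - 1 + k - 1) / k = m := by
        rw [e2, Nat.mul_add_div hk, Nat.div_eq_of_lt (by omega), add_zero]
      simp only [mkTau, hmod, hdiv, hceil, hmod1, hdiv1, hceil1, zero_mul, Nat.sub_zero,
        zero_add, one_mul]
      rw [← hmeq, pascal]
      obtain ⟨s, hs⟩ : ∃ s, k = s + 1 := ⟨k - 1, by omega⟩
      have e : k - 1 = s := by omega
      rw [e, hs]; ring
    · -- r ≥ 2
      have e1 : n - 1 = k * m + (r - 1) := by rw [← hP]; omega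
      have hmod1 : (n - 1) % k = r - 1 := by
        rw [e1, Nat.mul_add_mod, Nat.mod_eq_of_lt (by omega)]
      have hdiv1 : (n - 1) / k = m := by
        rw [e1, Nat.mul_add_div hk, Nat.div_eq_of_lt (by omega), add_zero]
      have e2 : n - 1 + k - 1 = k * (m + 1) + (r - 2) := by rw [Nat.mul_succ, ← hP]; omega
      have hceil1 : (n - 1 + k - 1) / k = m + 1 := by
        rw [e2, Nat.mul_add_div hk, Nat.div_eq_of_lt (by omega), add_zero]
      simp only [mkTau, hmod, hdiv, hceil, hmod1, hdiv1, hceil1]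
      rw [← hmeq, pascal]
      obtain ⟨t, ht⟩ : ∃ t, r = t + 2 := ⟨r - 2, by omega⟩
      obtain ⟨s, hs⟩ : ∃ s, k = t + 2 + s := ⟨k - r, by omega⟩
      have ea : k - r = s := by omega
      have eb : k - (r - 1) = s + 1 := by omega
      have ec : r - 1 = t + 1 := by omega
      rw [ea, eb, ec, ht, hs]; ring
end

section
/- Let P be a finite poset of height h with canonical antichain decomposition A_1, ..., A_h, and suppose i ≤ j are indices with |A'_i| = ... = |A'_j| = k, where A'_m = {x ∈ A_m : u_m(x) ≥ 1}. Then there exists d ≥ 0 and pairwise disjoint chains L_1, ..., L_{k−d}, each with j − i + 1 elements, with min L_p ∈ A'_i and max L_p ∈ A'_j, such that Σ_i ≥ Σ_j + d. -/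
open scoped Classical


open scoped Classical in
/-- chains with `n` elements and minimum `x`, as a Finset. -/
noncomputable def Cset {P : Type*} [Fintype P] [PartialOrder P] (n : ℕ) (x : P) :
    Finset (Finset P) :=
  Finset.univ.filter (fun c => IsChain (· ≤ ·) (↑c : Set P) ∧ x ∈ c ∧
    (∀ y ∈ c, x ≤ y) ∧ c.card = n)

lemma mem_Cset {P : Type*} [Fintype P] [PartialOrder P] {n : ℕ} {x : P} {c : Finset P} :
    c ∈ Cset n x ↔ IsChain (· ≤ ·) (↑c : Set P) ∧ x ∈ c ∧ (∀ y ∈ c, x ≤ y) ∧ c.card = n := by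
  classical
  simp [Cset]

lemma uCount_eq_card {P : Type*} [Fintype P] [PartialOrder P] (h m : ℕ) (x : P) :
    uCount h m x = (Cset (h - m + 1) x).card := by
  have hs : {c : Finset P | IsChain (· ≤ ·) (↑c : Set P) ∧ x ∈ c ∧
      (∀ y ∈ c, x ≤ y) ∧ c.card = h - m + 1} = ↑(Cset (h - m + 1) x) := by
    ext c; simp [mem_Cset]
  rw [uCount, hs, Set.ncard_coe_finset]

/-- a finite chain has a top element -/
lemma chain_exists_top {P : Type*} [PartialOrder P] {s : Finset P}
    (hc : IsChain (· ≤ ·) (↑s : Set P)) (hs : s.Nonempty) :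
    ∃ b ∈ s, ∀ z ∈ s, z ≤ b := by
  obtain ⟨b, hb, hmax⟩ := s.exists_maximal hs
  refine ⟨b, hb, fun z hz => ?_⟩
  rcases eq_or_ne z b with rfl | hne
  · exact le_rfl
  · rcases hc hz hb hne with h' | h'
    · exact h'
    · exact hmax hz h'

/-- a finite chain has a bottom element -/
lemma chain_exists_bot {P : Type*} [PartialOrder P] {s : Finset P}
    (hc : IsChain (· ≤ ·) (↑s : Set P)) (hs : s.Nonempty) :
    ∃ b ∈ s, ∀ z ∈ s, b ≤ z := by
  obtain ⟨b, hb, hmin⟩ := s.exists_minimal hs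
  refine ⟨b, hb, fun z hz => ?_⟩
  rcases eq_or_ne z b with rfl | hne
  · exact le_rfl
  · rcases hc hz hb hne with h' | h'
    · exact hmin hz h'
    · exact h'

lemma levelAt_unique_s18 {P : Type*} [PartialOrder P] {m m' : ℕ} {x : P}
    (h1 : levelAt m x) (h2 : levelAt m' x) : m = m' := by
  obtain ⟨⟨c, hc, hxc, hcx, hcard⟩, hub⟩ := h1
  obtain ⟨⟨c', hc', hxc', hcx', hcard'⟩, hub'⟩ := h2
  have := hub' c hc hxc hcx
  have := hub c' hc' hxc' hcx'
  omega

/-- inserting an element below a chain -/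
lemma insert_chain {P : Type*} [PartialOrder P] {c : Finset P} {y : P}
    (hc : IsChain (· ≤ ·) (↑c : Set P)) (hy : ∀ z ∈ c, y ≤ z) :
    IsChain (· ≤ ·) (↑(insert y c) : Set P) := by
  rw [Finset.coe_insert]
  exact hc.insert (fun b hb _ => Or.inl (hy b hb))

lemma insert_chain_top {P : Type*} [PartialOrder P] {c : Finset P} {x : P}
    (hc : IsChain (· ≤ ·) (↑c : Set P)) (hx : ∀ z ∈ c, z ≤ x) :
    IsChain (· ≤ ·) (↑(insert x c) : Set P) := by
  rw [Finset.coe_insert]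
  exact hc.insert (fun b hb _ => Or.inr (hx b hb))

/-- levels are strictly monotone along `<` -/
lemma levelAt_strict {P : Type*} [PartialOrder P] {m m' : ℕ} {x y : P}
    (hy : levelAt m y) (hx : levelAt m' x) (hyx : y ≤ x) (hne : y ≠ x) : m < m' := by
  obtain ⟨⟨c, hc, hyc, hcy, hcard⟩, -⟩ := hy
  obtain ⟨-, hub⟩ := hx
  have hxc : x ∉ c := fun hxc => hne (le_antisymm hyx (hcy x hxc))
  have : (insert x c).card ≤ m' := by
    refine hub _ (insert_chain_top hc (fun z hz => (hcy z hz).trans hyx)) (Finset.mem_insert_self _ _) ?_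
    intro z hz
    rcases Finset.mem_insert.mp hz with rfl | hz
    · exact le_rfl
    · exact (hcy z hz).trans hyx
  rw [Finset.card_insert_of_notMem hxc] at this
  omega

/-- upper bound on level given a chain upward from x -/
lemma levelAt_upper {P : Type*} [Fintype P] [PartialOrder P] {h m : ℕ} {x : P}
    (hh : ∀ c : Finset P, IsChain (· ≤ ·) (↑c : Set P) → c.card ≤ h)
    (hx : levelAt m x) {e : Finset P} (he : IsChain (· ≤ ·) (↑e : Set P))
    (hxe : x ∈ e) (hmin : ∀ z ∈ e, x ≤ z) : m + e.card ≤ h + 1 := by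
  obtain ⟨⟨c, hc, hxc, hcx, hcard⟩, -⟩ := hx
  have hunion : IsChain (· ≤ ·) (↑(c ∪ e) : Set P) := by
    rw [Finset.coe_union]
    intro a ha b hb hne
    rcases ha with ha | ha
    · rcases hb with hb | hb
      · exact hc ha hb hne
      · exact Or.inl ((hcx a ha).trans (hmin b hb))
    · rcases hb with hb | hb
      · exact Or.inr ((hcx b hb).trans (hmin a ha))
      · exact he ha hb hne
  have hinter : c ∩ e = {x} := by
    ext z
    simp only [Finset.mem_inter, Finset.mem_singleton]
    constructor
    · rintro ⟨hz1, hz2⟩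
      exact le_antisymm (hcx z hz1) (hmin z hz2)
    · rintro rfl
      exact ⟨hxc, hxe⟩
  have := hh _ hunion
  have hcu : (c ∪ e).card + (c ∩ e).card = c.card + e.card := Finset.card_union_add_card_inter c e
  rw [hinter] at hcu
  simp at hcu
  omega

section Work
variable {P : Type*} [Fintype P] [PartialOrder P]

/-- inserting a new minimum into a chain counted in `Cset n x` -/
lemma insert_mem_Cset {n : ℕ} {x y : P} {c : Finset P}
    (hc : c ∈ Cset n x) (hyx : y ≤ x) (hne : y ≠ x) :
    y ∉ c ∧ insert y c ∈ Cset (n + 1) y := by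
  obtain ⟨hch, hxc, hmin, hcard⟩ := mem_Cset.mp hc
  have hyc : y ∉ c := fun hyc => hne (le_antisymm hyx (hmin y hyc))
  refine ⟨hyc, mem_Cset.mpr ⟨insert_chain hch (fun z hz => hyx.trans (hmin z hz)),
    Finset.mem_insert_self _ _, fun z hz => ?_, ?_⟩⟩
  · rcases Finset.mem_insert.mp hz with rfl | hz
    · exact le_rfl
    · exact hyx.trans (hmin z hz)
  · rw [Finset.card_insert_of_notMem hyc, hcard]

/-- distinct minima give disjoint chain sets -/
lemma Cset_disjoint {n : ℕ} {x x' : P} (hne : x ≠ x') :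
    Disjoint (Cset n x) (Cset n x') := by
  rw [Finset.disjoint_left]
  intro c hc hc'
  obtain ⟨-, hxc, hmin, -⟩ := mem_Cset.mp hc
  obtain ⟨-, hxc', hmin', -⟩ := mem_Cset.mp hc'
  exact hne (le_antisymm (hmin x' hxc') (hmin' x hxc))

/-- Key injection: `u_m(y) ≥ Σ_{x ∈ F, y < x} u_{m+1}(x)` where the chains at level
`m+1` have `n` elements and at level `m` have `n+1` elements. -/
lemma sum_Cset_le {n : ℕ} (y : P) (F : Finset P) (hF : ∀ x ∈ F, y ≤ x ∧ y ≠ x) :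
    ∑ x ∈ F, (Cset n x).card ≤ (Cset (n + 1) y).card := by
  rw [← Finset.card_biUnion (fun x hx _ hx' hne => Cset_disjoint hne)]
  refine Finset.card_le_card_of_injOn (fun c => insert y c) ?_ ?_
  · intro c hc
    obtain ⟨x, hxF, hcx⟩ := Finset.mem_biUnion.mp hc
    exact (insert_mem_Cset hcx (hF x hxF).1 (hF x hxF).2).2
  · intro c hc c' hc' heq
    obtain ⟨x, hxF, hcx⟩ := Finset.mem_biUnion.mp (by exact hc)
    obtain ⟨x', hxF', hcx'⟩ := Finset.mem_biUnion.mp (by exact hc')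
    have h1 := (insert_mem_Cset hcx (hF x hxF).1 (hF x hxF).2).1
    have h2 := (insert_mem_Cset hcx' (hF x' hxF').1 (hF x' hxF').2).1
    have : (insert y c).erase y = (insert y c').erase y := by
      simp only at heq; rw [heq]
    rwa [Finset.erase_insert h1, Finset.erase_insert h2] at this

end Work

section Work2
variable {P : Type*} [Fintype P] [PartialOrder P] {h : ℕ}
variable (hub : ∀ c : Finset P, IsChain (· ≤ ·) (↑c : Set P) → c.card ≤ h)
variable {A A' : ℕ → Finset P}
variable (hA : ∀ m x, x ∈ A m ↔ levelAt m x)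
variable (hA' : ∀ m x, x ∈ A' m ↔ x ∈ A m ∧ 1 ≤ uCount h m x)

include hub in
/-- two chains meeting only at `x` (one below, one above) have bounded total size -/
lemma chain_bound {x : P} {d e : Finset P}
    (hd : IsChain (· ≤ ·) (↑d : Set P)) (hxd : x ∈ d) (hdx : ∀ z ∈ d, z ≤ x)
    (he : IsChain (· ≤ ·) (↑e : Set P)) (hxe : x ∈ e) (hex : ∀ z ∈ e, x ≤ z) :
    d.card + e.card ≤ h + 1 := by
  have hunion : IsChain (· ≤ ·) (↑(d ∪ e) : Set P) := by
    rw [Finset.coe_union]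
    intro a ha b hb hne
    rcases ha with ha | ha
    · rcases hb with hb | hb
      · exact hd ha hb hne
      · exact Or.inl ((hdx a ha).trans (hex b hb))
    · rcases hb with hb | hb
      · exact Or.inr ((hdx b hb).trans (hex a ha))
      · exact he ha hb hne
  have hinter : d ∩ e = {x} := by
    ext z
    simp only [Finset.mem_inter, Finset.mem_singleton]
    constructor
    · rintro ⟨hz1, hz2⟩
      exact le_antisymm (hdx z hz1) (hex z hz2)
    · rintro rfl
      exact ⟨hxd, hxe⟩
  have h1 := hub _ hunion
  have hcu : (d ∪ e).card + (d ∩ e).card = d.card + e.card := Finset.card_union_add_card_inter d e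
  rw [hinter] at hcu
  simp at hcu
  omega

include hub hA hA' in
/-- every element of `A'_m` has an up-neighbour in `A'_{m+1}` (for `m + 1 ≤ h`) -/
lemma up_neighbor {m : ℕ} (hm : m + 1 ≤ h) {y : P} (hy : y ∈ A' m) :
    ∃ x ∈ A' (m + 1), y ≤ x ∧ y ≠ x := by
  obtain ⟨hyA, hyu⟩ := (hA' m y).mp hy
  rw [uCount_eq_card] at hyu
  obtain ⟨c, hc⟩ := Finset.card_pos.mp hyu
  obtain ⟨hch, hyc, hmin, hcard⟩ := mem_Cset.mp hc
  have hlev : levelAt m y := (hA m y).mp hyA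
  -- the chain without its bottom
  set c' := c.erase y with hc'def
  have hc'sub : c' ⊆ c := Finset.erase_subset _ _
  have hc'chain : IsChain (· ≤ ·) (↑c' : Set P) :=
    hch.mono (by exact_mod_cast Finset.coe_subset.mpr hc'sub)
  have hc'card : c'.card = h - m := by
    rw [hc'def, Finset.card_erase_of_mem hyc, hcard]; omega
  have hc'ne : c'.Nonempty := Finset.card_pos.mp (by omega)
  obtain ⟨x, hxc', hxbot⟩ := chain_exists_bot hc'chain hc'ne
  have hyx : y ≤ x := hmin x (hc'sub hxc')
  have hne : y ≠ x := fun hh' => (Finset.mem_erase.mp hxc').1 hh'.symm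
  have hxmem : x ∈ c' := hxc'
  -- x has level m + 1
  have hxlev : levelAt (m + 1) x := by
    obtain ⟨⟨c₀, hc₀, hyc₀, hc₀y, hc₀card⟩, -⟩ := hlev
    have hxc₀ : x ∉ c₀ := fun hx => hne (le_antisymm hyx (hc₀y x hx))
    constructor
    · refine ⟨insert x c₀, insert_chain_top hc₀ (fun z hz => (hc₀y z hz).trans hyx),
        Finset.mem_insert_self _ _, fun z hz => ?_, ?_⟩
      · rcases Finset.mem_insert.mp hz with rfl | hz
        · exact le_rfl
        · exact (hc₀y z hz).trans hyx
      · rw [Finset.card_insert_of_notMem hxc₀, hc₀card]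
    · intro d hd hxd hdx
      have := chain_bound hub hd hxd hdx hc'chain hxmem
        (fun z hz => le_of_eq_or_lt (by
          rcases eq_or_ne x z with h' | h'
          · exact Or.inl h'
          · rcases hc'chain hxmem hz h' with h2 | h2
            · exact Or.inr (lt_of_le_of_ne h2 h')
            · exact Or.inl (le_antisymm (hxbot z hz) h2)))
      omega
  -- x is in A'_{m+1}
  refine ⟨x, (hA' (m + 1) x).mpr ⟨(hA (m + 1) x).mpr hxlev, ?_⟩, hyx, hne⟩
  rw [uCount_eq_card]
  refine Finset.card_pos.mpr ⟨c', mem_Cset.mpr ⟨hc'chain, hxmem, ?_, by omega⟩⟩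
  intro z hz
  rcases eq_or_ne x z with h' | h'
  · exact le_of_eq h'
  · rcases hc'chain hxmem hz h' with h2 | h2
    · exact h2
    · exact le_of_eq (le_antisymm (hxbot z hz) h2)

include hub hA hA' in
/-- every element of `A'_{m+1}` has a down-neighbour in `A'_m` (for `1 ≤ m`, `m + 1 ≤ h`) -/
lemma down_neighbor {m : ℕ} (hm1 : 1 ≤ m) (hm : m + 1 ≤ h) {x : P} (hx : x ∈ A' (m + 1)) :
    ∃ y ∈ A' m, y ≤ x ∧ y ≠ x := by
  obtain ⟨hxA, hxu⟩ := (hA' (m + 1) x).mp hx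
  have hxlev : levelAt (m + 1) x := (hA (m + 1) x).mp hxA
  obtain ⟨⟨c₀, hc₀, hxc₀, hc₀x, hc₀card⟩, hxub⟩ := hxlev
  set c₁ := c₀.erase x with hc₁def
  have hc₁sub : c₁ ⊆ c₀ := Finset.erase_subset _ _
  have hc₁chain : IsChain (· ≤ ·) (↑c₁ : Set P) :=
    hc₀.mono (by exact_mod_cast Finset.coe_subset.mpr hc₁sub)
  have hc₁card : c₁.card = m := by
    rw [hc₁def, Finset.card_erase_of_mem hxc₀, hc₀card]; omega
  have hc₁ne : c₁.Nonempty := Finset.card_pos.mp (by omega)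
  obtain ⟨y, hyc₁, hytop⟩ := chain_exists_top hc₁chain hc₁ne
  have hyx : y ≤ x := hc₀x y (hc₁sub hyc₁)
  have hne : y ≠ x := (Finset.mem_erase.mp hyc₁).1
  -- y has level m
  have hylev : levelAt m y := by
    constructor
    · exact ⟨c₁, hc₁chain, hyc₁, hytop, hc₁card⟩
    · intro d hd hyd hdy
      have hxd : x ∉ d := fun hxd => hne (le_antisymm hyx (hdy x hxd))
      have := hxub (insert x d) (insert_chain_top hd (fun z hz => (hdy z hz).trans hyx))
        (Finset.mem_insert_self _ _) (fun z hz => by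
          rcases Finset.mem_insert.mp hz with rfl | hz
          · exact le_rfl
          · exact (hdy z hz).trans hyx)
      rw [Finset.card_insert_of_notMem hxd] at this
      omega
  -- u_m(y) ≥ 1
  refine ⟨y, (hA' m y).mpr ⟨(hA m y).mpr hylev, ?_⟩, hyx, hne⟩
  rw [uCount_eq_card] at hxu ⊢
  obtain ⟨cc, hcc⟩ := Finset.card_pos.mp hxu
  have hkey := (insert_mem_Cset hcc hyx hne).2
  have harith : h - (m + 1) + 1 + 1 = h - m + 1 := by omega
  rw [harith] at hkey
  exact Finset.card_pos.mpr ⟨_, hkey⟩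

end Work2

section Work3
variable {P : Type*} [Fintype P] [PartialOrder P] {h : ℕ}
variable {hub : ∀ c : Finset P, IsChain (· ≤ ·) (↑c : Set P) → c.card ≤ h}
variable {A A' : ℕ → Finset P}
variable {hA : ∀ m x, x ∈ A m ↔ levelAt m x}
variable {hA' : ∀ m x, x ∈ A' m ↔ x ∈ A m ∧ 1 ≤ uCount h m x}

lemma sigma_step (hub : ∀ c : Finset P, IsChain (· ≤ ·) (↑c : Set P) → c.card ≤ h)
    (hA : ∀ m x, x ∈ A m ↔ levelAt m x)
    (hA' : ∀ m x, x ∈ A' m ↔ x ∈ A m ∧ 1 ≤ uCount h m x)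
    {m : ℕ} (hm1 : 1 ≤ m) (hm : m + 1 ≤ h)
    {k : ℕ} (hkm : (A' m).card = k) (hkm1 : (A' (m + 1)).card = k)
    (S : Finset P) (hS : S ⊆ A' (m + 1)) :
    (∑ x ∈ A (m + 1), uCount h (m + 1) x) + S.card ≤
      (∑ y ∈ A m, uCount h m y) +
        (S.biUnion (fun x => (A' m).filter (fun y => y ≤ x ∧ y ≠ x))).card := by
  classical
  set nbr : P → Finset P := fun x => (A' m).filter (fun y => y ≤ x ∧ y ≠ x) with hnbr
  set g : P → ℕ := fun x => (nbr x).card with hg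
  set NS := S.biUnion nbr with hNS
  have hsubA : ∀ n, A' n ⊆ A n := fun n x hx => ((hA' n x).mp hx).1
  -- Σ_{A(m+1)} u = Σ_{A'(m+1)} u
  have step1 : ∑ x ∈ A (m + 1), uCount h (m + 1) x = ∑ x ∈ A' (m + 1), uCount h (m + 1) x := by
    refine (Finset.sum_subset (hsubA (m + 1)) ?_).symm
    intro x hx hnx
    by_contra hcon
    exact hnx ((hA' (m + 1) x).mpr ⟨hx, by omega⟩)
  -- Σ_{A'm} u ≤ Σ_{Am} u
  have step2 : ∑ y ∈ A' m, uCount h m y ≤ ∑ y ∈ A m, uCount h m y :=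
    Finset.sum_le_sum_of_subset (hsubA m)
  -- per-y injection
  have step3 : ∀ y : P,
      ∑ x ∈ (A' (m + 1)).filter (fun x => y ≤ x ∧ y ≠ x), uCount h (m + 1) x ≤ uCount h m y := by
    intro y
    have harith : h - (m + 1) + 1 + 1 = h - m + 1 := by omega
    calc ∑ x ∈ (A' (m + 1)).filter (fun x => y ≤ x ∧ y ≠ x), uCount h (m + 1) x
        = ∑ x ∈ (A' (m + 1)).filter (fun x => y ≤ x ∧ y ≠ x), (Cset (h - (m + 1) + 1) x).card := by
          refine Finset.sum_congr rfl (fun x _ => ?_); rw [uCount_eq_card]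
      _ ≤ (Cset (h - (m + 1) + 1 + 1) y).card := by
          refine sum_Cset_le y _ (fun x hx => ?_)
          exact (Finset.mem_filter.mp hx).2
      _ = uCount h m y := by rw [harith, uCount_eq_card]
  -- sum swap
  have step4 : ∑ y ∈ A' m, ∑ x ∈ (A' (m + 1)).filter (fun x => y ≤ x ∧ y ≠ x), uCount h (m + 1) x
      = ∑ x ∈ A' (m + 1), g x * uCount h (m + 1) x := by
    simp_rw [Finset.sum_filter]
    rw [Finset.sum_comm]
    refine Finset.sum_congr rfl (fun x _ => ?_)
    rw [← Finset.sum_filter, Finset.sum_const, smul_eq_mul]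
  have step34 : ∑ x ∈ A' (m + 1), g x * uCount h (m + 1) x ≤ ∑ y ∈ A' m, uCount h m y := by
    rw [← step4]
    exact Finset.sum_le_sum (fun y _ => step3 y)
  -- per-term inequality
  have hg1 : ∀ x ∈ A' (m + 1), 1 ≤ g x := by
    intro x hx
    obtain ⟨y, hy, hyx, hne⟩ := down_neighbor hub hA hA' hm1 hm hx
    exact Finset.card_pos.mpr ⟨y, Finset.mem_filter.mpr ⟨hy, hyx, hne⟩⟩
  have hu1 : ∀ x ∈ A' (m + 1), 1 ≤ uCount h (m + 1) x := fun x hx => ((hA' (m + 1) x).mp hx).2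
  have step5 : ∑ x ∈ A' (m + 1), uCount h (m + 1) x + ∑ x ∈ A' (m + 1), g x ≤
      ∑ x ∈ A' (m + 1), g x * uCount h (m + 1) x + k := by
    have : ∀ x ∈ A' (m + 1), uCount h (m + 1) x + g x ≤ g x * uCount h (m + 1) x + 1 := by
      intro x hx
      have h1 := hg1 x hx
      have h2 := hu1 x hx
      nlinarith
    calc ∑ x ∈ A' (m + 1), uCount h (m + 1) x + ∑ x ∈ A' (m + 1), g x
        = ∑ x ∈ A' (m + 1), (uCount h (m + 1) x + g x) := (Finset.sum_add_distrib).symm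
      _ ≤ ∑ x ∈ A' (m + 1), (g x * uCount h (m + 1) x + 1) := Finset.sum_le_sum this
      _ = ∑ x ∈ A' (m + 1), g x * uCount h (m + 1) x + k := by
          rw [Finset.sum_add_distrib, Finset.sum_const, smul_eq_mul, mul_one, hkm1]
  -- edge count lower bound
  have hNSsub : NS ⊆ A' m := by
    intro y hy
    obtain ⟨x, -, hy'⟩ := Finset.mem_biUnion.mp hy
    exact (Finset.mem_filter.mp hy').1
  have step6a : S.card ≤ ∑ x ∈ S, g x :=
    calc S.card = ∑ _x ∈ S, 1 := by rw [Finset.sum_const, smul_eq_mul, mul_one]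
      _ ≤ ∑ x ∈ S, g x := Finset.sum_le_sum (fun x hx => hg1 x (hS hx))
  have step6b : (A' m).card ≤ ∑ x ∈ A' (m + 1) \ S, g x + NS.card := by
    have hcov : A' m \ NS ⊆ (A' (m + 1) \ S).biUnion nbr := by
      intro y hy
      obtain ⟨hyA', hyNS⟩ := Finset.mem_sdiff.mp hy
      obtain ⟨x, hx, hyx, hne⟩ := up_neighbor hub hA hA' hm hyA'
      have hxS : x ∉ S := by
        intro hxS
        exact hyNS (Finset.mem_biUnion.mpr ⟨x, hxS, Finset.mem_filter.mpr ⟨hyA', hyx, hne⟩⟩)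
      exact Finset.mem_biUnion.mpr ⟨x, Finset.mem_sdiff.mpr ⟨hx, hxS⟩,
        Finset.mem_filter.mpr ⟨hyA', hyx, hne⟩⟩
    have h1 : (A' m \ NS).card ≤ ∑ x ∈ A' (m + 1) \ S, g x :=
      le_trans (Finset.card_le_card hcov) (Finset.card_biUnion_le)
    have h2 : (A' m \ NS).card = (A' m).card - NS.card := Finset.card_sdiff_of_subset hNSsub
    have h3 : NS.card ≤ (A' m).card := Finset.card_le_card hNSsub
    omega
  have step6 : S.card + k ≤ ∑ x ∈ A' (m + 1), g x + NS.card := by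
    have hsplit : ∑ x ∈ A' (m + 1) \ S, g x + ∑ x ∈ S, g x = ∑ x ∈ A' (m + 1), g x :=
      Finset.sum_sdiff hS
    omega
  -- combine
  rw [step1]
  omega

end Work3

/-- Defect version of Hall's theorem. -/
lemma defect_hall {P : Type*} [Fintype P] [DecidableEq P] (S : Finset P) (nbr : P → Finset P)
    (d : ℕ) (hd : ∀ S' ⊆ S, S'.card ≤ (S'.biUnion nbr).card + d) :
    ∃ (T : Finset P) (f : P → P), T ⊆ S ∧ S.card ≤ T.card + d ∧
      Set.InjOn f ↑T ∧ ∀ x ∈ T, f x ∈ nbr x := by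
  classical
  set t : {x // x ∈ S} → Finset (P ⊕ Fin d) :=
    fun x => ((nbr ↑x).image Sum.inl) ∪ (Finset.univ.image (Sum.inr : Fin d → P ⊕ Fin d))
    with ht
  have hall : ∀ s : Finset {x // x ∈ S}, s.card ≤ (s.biUnion t).card := by
    intro s
    rcases s.eq_empty_or_nonempty with rfl | hne
    · simp
    have hbi : s.biUnion t = ((s.image Subtype.val).biUnion nbr).image Sum.inl ∪
        (Finset.univ.image (Sum.inr : Fin d → P ⊕ Fin d)) := by
      obtain ⟨x0, hx0⟩ := hne
      ext a
      simp only [ht, Finset.mem_biUnion, Finset.mem_union, Finset.mem_image, Finset.mem_univ,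
        true_and, Finset.mem_biUnion]
      constructor
      · rintro ⟨x, hxs, hax⟩
        rcases hax with ⟨b, hb, rfl⟩ | ⟨b, hb⟩
        · exact Or.inl ⟨b, ⟨↑x, ⟨x, hxs, rfl⟩, hb⟩, rfl⟩
        · exact Or.inr ⟨b, hb⟩
      · rintro (⟨b, ⟨y, ⟨x, hxs, rfl⟩, hb⟩, rfl⟩ | ⟨b, hb⟩)
        · exact ⟨x, hxs, Or.inl ⟨b, hb, rfl⟩⟩
        · exact ⟨x0, hx0, Or.inr ⟨b, hb⟩⟩
    have hdisj : Disjoint (((s.image Subtype.val).biUnion nbr).image Sum.inl)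
        (Finset.univ.image (Sum.inr : Fin d → P ⊕ Fin d)) := by
      rw [Finset.disjoint_left]
      rintro a hmem1 hmem2
      obtain ⟨b, -, rfl⟩ := Finset.mem_image.mp hmem1
      obtain ⟨c, -, hc⟩ := Finset.mem_image.mp hmem2
      exact Sum.inl_ne_inr hc.symm
    have hcard1 : (((s.image Subtype.val).biUnion nbr).image Sum.inl).card =
        ((s.image Subtype.val).biUnion nbr).card :=
      Finset.card_image_of_injective _ (Sum.inl_injective : Function.Injective (Sum.inl : P → P ⊕ Fin d))
    have hcard2 : ((Finset.univ.image (Sum.inr : Fin d → P ⊕ Fin d))).card = d := by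
      rw [Finset.card_image_of_injective _ (Sum.inr_injective : Function.Injective (Sum.inr : Fin d → P ⊕ Fin d))]
      simp
    have hS' : (s.image Subtype.val) ⊆ S := by
      rintro y hy
      obtain ⟨x, -, rfl⟩ := Finset.mem_image.mp hy
      exact x.2
    have hscard : (s.image Subtype.val).card = s.card :=
      Finset.card_image_of_injective _ Subtype.val_injective
    rw [hbi, Finset.card_union_of_disjoint hdisj, hcard1, hcard2]
    have := hd _ hS'
    omega
  obtain ⟨f, hfinj, hft⟩ := (Finset.all_card_le_biUnion_card_iff_existsInjective' t).mp hall
  set T' := S.attach.filter (fun x => (f x).isLeft) with hT'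
  set T := T'.image Subtype.val with hT
  set ff : P → P := fun x => if hx : x ∈ S then Sum.elim id (fun _ => x) (f ⟨x, hx⟩) else x
    with hff
  have hmemT : ∀ x (hx : x ∈ T), ∃ (hxS : x ∈ S), ∃ a, f ⟨x, hxS⟩ = Sum.inl a ∧ ff x = a := by
    intro x hx
    obtain ⟨x', hx', rfl⟩ := Finset.mem_image.mp hx
    have hleft := (Finset.mem_filter.mp hx').2
    obtain ⟨a, ha⟩ := Sum.isLeft_iff.mp hleft
    refine ⟨x'.2, a, (by rw [Subtype.coe_eta]; exact ha), ?_⟩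
    rw [hff]
    simp only [x'.2, dif_pos, Subtype.coe_eta, ha, Sum.elim_inl, id]
  refine ⟨T, ff, ?_, ?_, ?_, ?_⟩
  · rintro y hy
    obtain ⟨x, -, rfl⟩ := Finset.mem_image.mp hy
    exact x.2
  · -- cardinality
    have hsplit : T'.card + (S.attach.filter (fun x => ¬(f x).isLeft)).card = S.attach.card :=
      Finset.card_filter_add_card_filter_not _
    have hTcard : T.card = T'.card := Finset.card_image_of_injective _ Subtype.val_injective
    have hR : (S.attach.filter (fun x => ¬(f x).isLeft)).card ≤ d := by
      have : (S.attach.filter (fun x => ¬(f x).isLeft)).card ≤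
          ((Finset.univ : Finset (Fin d)).image (Sum.inr : Fin d → P ⊕ Fin d)).card := by
        refine Finset.card_le_card_of_injOn f ?_ ?_
        · intro x hx
          have hnl := (Finset.mem_filter.mp hx).2
          obtain ⟨b, hb⟩ := Sum.isRight_iff.mp (Sum.not_isLeft.mp hnl)
          rw [hb]
          exact Finset.mem_image.mpr ⟨b, Finset.mem_univ b, rfl⟩
        · exact fun x _ y _ hxy => hfinj hxy
      have hcard2 : ((Finset.univ.image (Sum.inr : Fin d → P ⊕ Fin d))).card = d := by
        rw [Finset.card_image_of_injective _ (Sum.inr_injective : Function.Injective (Sum.inr : Fin d → P ⊕ Fin d))]; simp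
      omega
    rw [Finset.card_attach] at hsplit
    omega
  · -- injectivity
    intro x hx y hy hxy
    obtain ⟨hxS, a, hfa, hffa⟩ := hmemT x hx
    obtain ⟨hyS, b, hfb, hffb⟩ := hmemT y hy
    rw [hffa, hffb] at hxy
    subst hxy
    have : f ⟨x, hxS⟩ = f ⟨y, hyS⟩ := by rw [hfa, hfb]
    have := hfinj this
    exact congrArg Subtype.val this
  · -- maps into neighborhoods
    intro x hx
    obtain ⟨hxS, a, hfa, hffa⟩ := hmemT x (by exact_mod_cast hx)
    have hmem := hft ⟨x, hxS⟩
    rw [hfa, ht] at hmem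
    simp only [Finset.mem_union, Finset.mem_image, Finset.mem_univ, true_and] at hmem
    rcases hmem with ⟨b, hb, heq⟩ | ⟨b, heq⟩
    · rw [hffa]
      rwa [← Sum.inl_injective heq]
    · exact absurd heq.symm Sum.inl_ne_inr

lemma descend {P : Type*} [Fintype P] [PartialOrder P] (h k i j : ℕ)
    (hub : ∀ c : Finset P, IsChain (· ≤ ·) (↑c : Set P) → c.card ≤ h)
    (A A' : ℕ → Finset P)
    (hA : ∀ m x, x ∈ A m ↔ levelAt m x)
    (hA' : ∀ m x, x ∈ A' m ↔ x ∈ A m ∧ 1 ≤ uCount h m x)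
    (hi : 1 ≤ i) (hij : i ≤ j) (hjh : j ≤ h)
    (hcard : ∀ m, i ≤ m → m ≤ j → (A' m).card = k) :
    ∀ n : ℕ, i + n ≤ j →
    ∃ (D : ℕ) (L : Fin (k - D) → Finset P),
      (∀ p, (L p).card = n + 1 ∧ IsChain (· ≤ ·) (↑(L p) : Set P) ∧
        (∃ x ∈ L p, x ∈ A' (j - n) ∧ ∀ y ∈ L p, x ≤ y) ∧
        (∃ x ∈ L p, x ∈ A' j ∧ ∀ y ∈ L p, y ≤ x)) ∧
      (∀ p q, p ≠ q → Disjoint (L p) (L q)) ∧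
      (∑ x ∈ A j, uCount h j x) + D ≤ ∑ x ∈ A (j - n), uCount h (j - n) x := by
  classical
  have hlevel : ∀ m z, z ∈ A' m → levelAt m z := fun m z hz => (hA m z).mp ((hA' m z).mp hz).1
  intro n
  induction n with
  | zero =>
    intro _
    refine ⟨0, ?_⟩
    have hc : (A' j).card = k - 0 := by rw [Nat.sub_zero]; exact hcard j hij le_rfl
    set e : Fin (k - 0) → {x // x ∈ A' j} := fun p => (A' j).equivFin.symm (Fin.cast hc.symm p)
      with he
    have heinj : Function.Injective e := fun p q hpq => by
      have := (A' j).equivFin.symm.injective hpq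
      exact Fin.cast_injective _ this
    refine ⟨fun p => {(e p).1}, fun p => ?_, ?_, ?_⟩
    · refine ⟨Finset.card_singleton _, ?_, ?_, ?_⟩
      · rw [Finset.coe_singleton]
        exact Set.subsingleton_singleton.isChain
      · exact ⟨(e p).1, Finset.mem_singleton_self _, by simpa using (e p).2,
          fun y hy => le_of_eq (Finset.mem_singleton.mp hy).symm⟩
      · exact ⟨(e p).1, Finset.mem_singleton_self _, (e p).2,
          fun y hy => le_of_eq (Finset.mem_singleton.mp hy)⟩
    · intro p q hpq
      rw [Finset.disjoint_left]
      intro z hz hz'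
      rw [Finset.mem_singleton] at hz hz'
      exact hpq (heinj (Subtype.ext (hz ▸ hz')))
    · simp
  | succ n IH =>
    intro hn1
    obtain ⟨D, L, hL, hdisj, hsum⟩ := IH (by omega)
    set m := j - (n + 1) with hmdef
    have hm1eq : j - n = m + 1 := by omega
    have hm1 : 1 ≤ m := by omega
    have hmh : m + 1 ≤ h := by omega
    have hkm : (A' m).card = k := hcard m (by omega) (by omega)
    have hkm1 : (A' (m + 1)).card = k := hcard (m + 1) (by omega) (by omega)
    -- bottoms of the chains
    have hbots : ∀ p, ∃ x, x ∈ L p ∧ x ∈ A' (m + 1) ∧ ∀ z ∈ L p, x ≤ z := by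
      intro p
      obtain ⟨x, hx1, hx2, hx3⟩ := (hL p).2.2.1
      exact ⟨x, hx1, hm1eq ▸ hx2, hx3⟩
    set xfun : Fin (k - D) → P := fun p => (hbots p).choose with hxfun
    have hxmem : ∀ p, xfun p ∈ L p := fun p => (hbots p).choose_spec.1
    have hxA : ∀ p, xfun p ∈ A' (m + 1) := fun p => (hbots p).choose_spec.2.1
    have hxbot : ∀ p, ∀ z ∈ L p, xfun p ≤ z := fun p => (hbots p).choose_spec.2.2
    have hxinj : Function.Injective xfun := by
      intro p q hpq
      by_contra hne
      exact (Finset.disjoint_left.mp (hdisj p q hne)) (hxmem p) (hpq ▸ hxmem q)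
    set S : Finset P := Finset.univ.image xfun with hS
    have hScard : S.card = k - D := by
      rw [hS, Finset.card_image_of_injective _ hxinj, Finset.card_univ, Fintype.card_fin]
    have hSsub : S ⊆ A' (m + 1) := by
      intro x hx
      obtain ⟨p, -, rfl⟩ := Finset.mem_image.mp hx
      exact hxA p
    set nbr : P → Finset P := fun x => (A' m).filter (fun y => y ≤ x ∧ y ≠ x) with hnbr
    set d' := S.powerset.sup (fun S' => S'.card - (S'.biUnion nbr).card) with hd'
    have hhall : ∀ S' ⊆ S, S'.card ≤ (S'.biUnion nbr).card + d' := by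
      intro S' hS'
      have h0 := Finset.le_sup (f := fun S' => S'.card - (S'.biUnion nbr).card)
        (Finset.mem_powerset.mpr hS')
      omega
    obtain ⟨T, f, hTS, hTcard, hfinj, hfnbr⟩ := defect_hall S nbr d' hhall
    -- the Σ bound
    have hsum' : (∑ x ∈ A j, uCount h j x) + (D + d') ≤ ∑ x ∈ A m, uCount h m x := by
      obtain ⟨S₀, hS₀mem, hS₀eq⟩ := Finset.exists_mem_eq_sup S.powerset
        ⟨∅, Finset.empty_mem_powerset S⟩ (fun S' => S'.card - (S'.biUnion nbr).card)
      have hS₀sub : S₀ ⊆ A' (m + 1) := le_trans (Finset.mem_powerset.mp hS₀mem) hSsub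
      have hstep := sigma_step hub hA hA' hm1 hmh hkm hkm1 S₀ hS₀sub
      have hmono := sigma_step hub hA hA' hm1 hmh hkm hkm1 ∅ (Finset.empty_subset _)
      simp only [Finset.biUnion_empty, Finset.card_empty, add_zero] at hmono
      rw [hm1eq] at hsum
      rw [← hnbr] at hstep
      omega
    -- selecting the surviving chains
    set T' : Finset (Fin (k - D)) := Finset.univ.filter (fun p => xfun p ∈ T) with hT'
    have hT'card : T'.card = T.card := by
      have himg : T'.image xfun = T := by
        apply Finset.Subset.antisymm
        · intro y hy
          obtain ⟨p, hp, rfl⟩ := Finset.mem_image.mp hy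
          exact (Finset.mem_filter.mp hp).2
        · intro y hy
          obtain ⟨p, -, rfl⟩ := Finset.mem_image.mp (hTS hy)
          exact Finset.mem_image.mpr ⟨p, Finset.mem_filter.mpr ⟨Finset.mem_univ p, hy⟩, rfl⟩
      rw [← himg, Finset.card_image_of_injective _ hxinj]
    have hT'big : k - (D + d') ≤ T'.card := by omega
    obtain ⟨T'', hT''sub, hT''card⟩ := Finset.exists_subset_card_eq hT'big
    set e : Fin (k - (D + d')) → Fin (k - D) :=
      fun q => (T''.equivFin.symm (Fin.cast hT''card.symm q)).1 with he
    have heinj : Function.Injective e := by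
      intro q q' hqq'
      have := Subtype.ext hqq'
      have := T''.equivFin.symm.injective this
      exact Fin.cast_injective _ this
    have heT : ∀ q, xfun (e q) ∈ T := by
      intro q
      have hmem : e q ∈ T'' := (T''.equivFin.symm (Fin.cast hT''card.symm q)).2
      exact (Finset.mem_filter.mp (hT''sub hmem)).2
    -- the new chains
    refine ⟨D + d', fun q => insert (f (xfun (e q))) (L (e q)), ?_, ?_, hsum'⟩
    · intro q
      set p := e q
      set x := xfun p
      have hfx := hfnbr x (heT q)
      rw [hnbr] at hfx
      obtain ⟨hfA, hfle, hfne⟩ := by exact Finset.mem_filter.mp hfx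
      have hfnotin : f x ∉ L p := fun hmem =>
        hfne (le_antisymm hfle (hxbot p _ hmem))
      obtain ⟨hcardp, hchainp, -, hmaxp⟩ := hL p
      refine ⟨?_, ?_, ?_, ?_⟩
      · rw [Finset.card_insert_of_notMem hfnotin, hcardp]
      · exact insert_chain hchainp (fun z hz => hfle.trans (hxbot p z hz))
      · refine ⟨f x, Finset.mem_insert_self _ _, hfA, fun z hz => ?_⟩
        rcases Finset.mem_insert.mp hz with rfl | hz
        · exact le_rfl
        · exact hfle.trans (hxbot p z hz)
      · obtain ⟨w, hw1, hw2, hw3⟩ := hmaxp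
        refine ⟨w, Finset.mem_insert_of_mem hw1, hw2, fun z hz => ?_⟩
        rcases Finset.mem_insert.mp hz with rfl | hz
        · exact (hfle.trans (hxbot p w hw1))
        · exact hw3 z hz
    · -- disjointness
      intro q q' hqq'
      have hpq : e q ≠ e q' := fun hh' => hqq' (heinj hh')
      rw [Finset.disjoint_left]
      intro z hz hz'
      have hlev_m : ∀ w, w ∈ A' m → levelAt m w := hlevel m
      have hlev_m1 : ∀ w, w ∈ A' (m + 1) → levelAt (m + 1) w := hlevel (m + 1)
      have key : ∀ a b : Fin (k - D), a ≠ b → xfun a ∈ T → xfun b ∈ A' (m + 1) →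
          f (xfun a) ∉ L b := by
        intro a b hab hfa hxb hmem
        have h1 : xfun b ≤ f (xfun a) := hxbot b _ hmem
        have hfA : f (xfun a) ∈ A' m := by
          have := hfnbr _ hfa
          rw [hnbr] at this
          exact (Finset.mem_filter.mp this).1
        rcases eq_or_ne (xfun b) (f (xfun a)) with heq | hne
        · have := levelAt_unique_s18 (hlev_m1 _ hxb) (heq ▸ hlev_m _ hfA)
          omega
        · have := levelAt_strict (hlev_m1 _ hxb) (hlev_m _ hfA) h1 hne
          omega
      rcases Finset.mem_insert.mp hz with rfl | hz
      · rcases Finset.mem_insert.mp hz' with heq | hz'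
        · -- f x = f x' : use injectivity of f on T
          have hxx : xfun (e q) = xfun (e q') :=
            hfinj (by exact_mod_cast heT q) (by exact_mod_cast heT q') heq
          exact hpq (hxinj hxx)
        · exact key (e q) (e q') hpq (heT q) (hxA (e q')) hz'
      · rcases Finset.mem_insert.mp hz' with heq | hz'
        · exact key (e q') (e q) (Ne.symm hpq) (heT q') (hxA (e q)) (heq ▸ hz)
        · exact (Finset.disjoint_left.mp (hdisj _ _ hpq)) hz hz'

/-- Disjoint chains through consecutive levels: if `|A'_i| = … = |A'_j| = k` then for
some `d ≥ 0` there are `k − d` pairwise disjoint chains with `j − i + 1` elements,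
each with minimum in `A'_i` and maximum in `A'_j`, and `Σ_i ≥ Σ_j + d`. -/
theorem stmt_18 {P : Type*} [Fintype P] [PartialOrder P] (h k i j : ℕ)
    (hh : (∃ c : Finset P, c.card = h ∧ IsChain (· ≤ ·) (↑c : Set P)) ∧
      ∀ c : Finset P, IsChain (· ≤ ·) (↑c : Set P) → c.card ≤ h)
    (A : ℕ → Finset P) (hA : ∀ m x, x ∈ A m ↔ levelAt m x)
    (hi : 1 ≤ i) (hij : i ≤ j) (hjh : j ≤ h)
    (A' : ℕ → Finset P) (hA' : ∀ m x, x ∈ A' m ↔ x ∈ A m ∧ 1 ≤ uCount h m x)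
    (hcard : ∀ m, i ≤ m → m ≤ j → (A' m).card = k) :
    ∃ (d : ℕ) (L : Fin (k - d) → Finset P),
      (∀ p, (L p).card = j - i + 1 ∧ IsChain (· ≤ ·) (↑(L p) : Set P) ∧
        (∃ x ∈ L p, x ∈ A' i ∧ ∀ y ∈ L p, x ≤ y) ∧
        (∃ x ∈ L p, x ∈ A' j ∧ ∀ y ∈ L p, y ≤ x)) ∧
      (∀ p q, p ≠ q → Disjoint (L p) (L q)) ∧
      (∑ x ∈ A j, uCount h j x) + d ≤ ∑ x ∈ A i, uCount h i x := by
  obtain ⟨D, L, hL, hdisj, hsum⟩ :=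
    descend h k i j hh.2 A A' hA hA' hi hij hjh hcard (j - i) (by omega)
  have hji : j - (j - i) = i := by omega
  rw [hji] at hL hsum
  exact ⟨D, L, hL, hdisj, hsum⟩
end
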